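/- arXiv:1111.4306 — 3 statements merged into one kernel-verified Lean document; each statement's English description precedes it below -/
import Mathlib

section
/- Covering property of the normalizing transformation (z-only case). Under the hypotheses of the local stability lemma in the large-κ case, the real analytic symplectic transformation Ψ: D_{2r}→D_{3r} produced by the normal form lemma (with |Ψ−id|_{2r} ≤ (18mr₂/r₁)εT) satisfies Ψ(D^{real}_{5r/3}) ⊇ D^{real}_r, where D^{real}_{a,b} = {z∈ℝ^{2n}: |I(z)−I⁰|<a, |z|<b}. -/
noncomputable section

open scoped BigOperators
open Real

/-- Complex phase space: `n` conjugate pairs. -/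
abbrev CVec (n : ℕ) := Fin n → ℂ × ℂ

/-- Real phase space: `n` conjugate pairs. -/
abbrev RVec (n : ℕ) := Fin n → ℝ × ℝ

/-- Embedding of the real phase space into the complex one. -/
def embedR {n : ℕ} (z : RVec n) : CVec n := fun j => (((z j).1 : ℂ), ((z j).2 : ℂ))

/-- The (complex) action `I_j(z) = (x_j^2 + y_j^2)/2`. -/
def cAction {n : ℕ} (z : CVec n) (j : Fin n) : ℂ := ((z j).1 ^ 2 + (z j).2 ^ 2) / 2

/-- `|I(z) - I⁰| = ∑_j |I_j(z) - I⁰_j|`. -/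
def cActionDist {n : ℕ} (z : CVec n) (I0 : Fin n → ℝ) : ℝ :=
  ∑ j, ‖cAction z j - (I0 j : ℂ)‖

/-- Square of the euclidean norm on the complex phase space. -/
def cNormSq {n : ℕ} (z : CVec n) : ℝ :=
  ∑ j, (‖(z j).1‖ ^ 2 + ‖(z j).2‖ ^ 2)

/-- Euclidean norm on the complex phase space. -/
def cNorm {n : ℕ} (z : CVec n) : ℝ := Real.sqrt (cNormSq z)

/-- The `z`-only domain `D_{r₁,r₂} = {z ∈ ℂ^{2n} : |I(z) − I⁰| < r₁, |z| < r₂}`. -/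
def DomZ {n : ℕ} (I0 : Fin n → ℝ) (r : ℝ × ℝ) : Set (CVec n) :=
  {z | cActionDist z I0 < r.1 ∧ cNorm z < r.2}

/-- A vector in `ℂ^{2n}` is real if all its components are. -/
def IsRealVec {n : ℕ} (z : CVec n) : Prop := ∀ j, ((z j).1.im = 0 ∧ (z j).2.im = 0)

/-- The (real) action `I_j(z) = (x_j^2 + y_j^2)/2`. -/
def rAction {n : ℕ} (z : RVec n) (j : Fin n) : ℝ := ((z j).1 ^ 2 + (z j).2 ^ 2) / 2

/-- Square of the euclidean norm. -/
def rNormSq {n : ℕ} (z : RVec n) : ℝ := ∑ j, ((z j).1 ^ 2 + (z j).2 ^ 2)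

/-- Euclidean norm. -/
def rNorm {n : ℕ} (z : RVec n) : ℝ := Real.sqrt (rNormSq z)

/-- Basis vector in the `x_j` direction. -/
def rex {n : ℕ} (j : Fin n) : RVec n := Function.update (0 : RVec n) j (1, 0)

/-- Basis vector in the `y_j` direction. -/
def rey {n : ℕ} (j : Fin n) : RVec n := Function.update (0 : RVec n) j (0, 1)

/-- Hamiltonian vector field of `H` on `ℝ^{2n} × ℝ^{2N}` (standard symplectic structure). -/
def rHamVF {n N : ℕ} (H : RVec n × RVec N → ℝ) (p : RVec n × RVec N) : RVec n × RVec N :=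
  (fun j => (fderiv ℝ H p (rey j, 0), -(fderiv ℝ H p (rex j, 0))),
   fun j => (fderiv ℝ H p ((0 : RVec n), rey j), -(fderiv ℝ H p ((0 : RVec n), rex j))))

/-- Integral curve of the Hamiltonian `H` on `ℝ^{2n} × ℝ^{2N}`. -/
def IsHamCurve {n N : ℕ} (H : RVec n × RVec N → ℝ) (γ : ℝ → RVec n × RVec N) : Prop :=
  ∀ t : ℝ, HasDerivAt γ (rHamVF H (γ t)) t

/-- `l¹` norm on `ℝⁿ`. -/
def l1Norm {n : ℕ} (v : Fin n → ℝ) : ℝ := ∑ j, |v j|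

/-- Operator norm of a matrix with respect to the `l¹` norm. -/
def l1OpNorm {n : ℕ} (A : Matrix (Fin n) (Fin n) ℝ) : ℝ :=
  sInf {c | 0 ≤ c ∧ ∀ v, l1Norm (A.mulVec v) ≤ c * l1Norm v}

/-- The euclidean norm of a frequency vector. -/
def euclNorm {n : ℕ} (ω : Fin n → ℝ) : ℝ := Real.sqrt (∑ j, (ω j) ^ 2)

/-- The real quadratic part `½⟨A(I(z) − I⁰), I(z) − I⁰⟩`. -/
def quadAR {n : ℕ} (A : Matrix (Fin n) (Fin n) ℝ) (I0 : Fin n → ℝ) (z : RVec n) : ℝ :=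
  (1 / 2) * ∑ i, ∑ j, A i j * (rAction z i - I0 i) * (rAction z j - I0 j)

/-- The standard symplectic form on `ℂ^{2n}`. -/
def sympZ {n : ℕ} (u v : CVec n) : ℂ :=
  ∑ j, ((u j).1 * (v j).2 - (u j).2 * (v j).1)

/-- A transformation of `ℂ^{2n}` is symplectic on `s` if its derivative preserves the
symplectic form. -/
def IsSymplecticOnZ {n : ℕ} (Ψ : CVec n → CVec n) (s : Set (CVec n)) : Prop :=
  ∀ p ∈ s, ∀ u v, sympZ (fderiv ℂ Ψ p u) (fderiv ℂ Ψ p v) = sympZ u v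


namespace CovAux

open Metric

variable {n : ℕ}

/-- Coordinates of `CVec n` as a Euclidean-space vector. -/
def toEuc (n : ℕ) : (CVec n) →ₗ[ℂ] EuclideanSpace ℂ (Fin n × Fin 2) where
  toFun z := WithLp.toLp 2 (fun p : Fin n × Fin 2 => if p.2 = 0 then (z p.1).1 else (z p.1).2)
  map_add' a b := by ext p; by_cases h : p.2 = 0 <;> simp [h]
  map_smul' c a := by ext p; by_cases h : p.2 = 0 <;> simp [h]

def E (n : ℕ) : (CVec n) →L[ℂ] EuclideanSpace ℂ (Fin n × Fin 2) :=
  LinearMap.toContinuousLinearMap (toEuc n)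

lemma cNorm_eq (z : CVec n) : cNorm z = ‖E n z‖ := by
  rw [EuclideanSpace.norm_eq, cNorm, cNormSq]
  congr 1
  rw [Fintype.sum_prod_type]
  refine Finset.sum_congr rfl fun j _ => ?_
  rw [Fin.sum_univ_two]
  simp [E, toEuc]

lemma cNorm_nonneg (z : CVec n) : 0 ≤ cNorm z := Real.sqrt_nonneg _
lemma cNorm_zero : cNorm (0 : CVec n) = 0 := by rw [cNorm_eq, map_zero, norm_zero]
lemma cNorm_neg (z : CVec n) : cNorm (-z) = cNorm z := by
  rw [cNorm_eq, cNorm_eq, map_neg, norm_neg]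
lemma cNorm_add_le (a b : CVec n) : cNorm (a + b) ≤ cNorm a + cNorm b := by
  rw [cNorm_eq, cNorm_eq, cNorm_eq, map_add]; exact norm_add_le _ _
lemma cNorm_sub_le (a b : CVec n) : cNorm (a - b) ≤ cNorm a + cNorm b := by
  rw [cNorm_eq, cNorm_eq, cNorm_eq, map_sub]; exact norm_sub_le _ _
lemma cNorm_smul (t : ℂ) (z : CVec n) : cNorm (t • z) = ‖t‖ * cNorm z := by
  rw [cNorm_eq, cNorm_eq, map_smul, norm_smul]
lemma cNorm_le_add_sub (a b : CVec n) : cNorm a ≤ cNorm b + cNorm (a - b) := by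
  rw [cNorm_eq, cNorm_eq, cNorm_eq, map_sub]
  linarith [abs_le.1 (abs_norm_sub_norm_le (E n a) (E n b))]

lemma abs_fst_le_cNorm (z : CVec n) (j : Fin n) : ‖(z j).1‖ ≤ cNorm z := by
  have h1 : ‖(z j).1‖ ^ 2 ≤ cNormSq z :=
    le_trans (le_add_of_nonneg_right (sq_nonneg _))
      (Finset.single_le_sum (f := fun i => ‖(z i).1‖ ^ 2 + ‖(z i).2‖ ^ 2)
        (fun i _ => by positivity) (Finset.mem_univ j))
  calc ‖(z j).1‖ = Real.sqrt (‖(z j).1‖ ^ 2) :=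
        (Real.sqrt_sq (by positivity)).symm
    _ ≤ cNorm z := Real.sqrt_le_sqrt h1

lemma abs_snd_le_cNorm (z : CVec n) (j : Fin n) : ‖(z j).2‖ ≤ cNorm z := by
  have h1 : ‖(z j).2‖ ^ 2 ≤ cNormSq z :=
    le_trans (le_add_of_nonneg_left (sq_nonneg _))
      (Finset.single_le_sum (f := fun i => ‖(z i).1‖ ^ 2 + ‖(z i).2‖ ^ 2)
        (fun i _ => by positivity) (Finset.mem_univ j))
  calc ‖(z j).2‖ = Real.sqrt (‖(z j).2‖ ^ 2) :=
        (Real.sqrt_sq (by positivity)).symm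
    _ ≤ cNorm z := Real.sqrt_le_sqrt h1

lemma norm_le_cNorm (z : CVec n) : ‖z‖ ≤ cNorm z := by
  rw [pi_norm_le_iff_of_nonneg (cNorm_nonneg z)]
  intro j
  rw [Prod.norm_def]
  exact max_le (by simpa using abs_fst_le_cNorm z j)
    (by simpa using abs_snd_le_cNorm z j)

lemma cNorm_pos (z : CVec n) (hz : z ≠ 0) : 0 < cNorm z :=
  lt_of_lt_of_le (norm_pos_iff.2 hz) (norm_le_cNorm z)

lemma cs {ι : Type*} [Fintype ι] (f g : ι → ℝ) :
    ∑ i, f i * g i ≤ Real.sqrt (∑ i, f i ^ 2) * Real.sqrt (∑ i, g i ^ 2) := by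
  have h := Finset.sum_mul_sq_le_sq_mul_sq Finset.univ f g
  calc ∑ i, f i * g i ≤ |∑ i, f i * g i| := le_abs_self _
    _ = Real.sqrt ((∑ i, f i * g i) ^ 2) := (Real.sqrt_sq_eq_abs _).symm
    _ ≤ Real.sqrt ((∑ i, f i ^ 2) * ∑ i, g i ^ 2) := Real.sqrt_le_sqrt h
    _ = _ := Real.sqrt_mul (by positivity) _

def absVec (z : CVec n) : Fin n × Fin 2 → ℝ :=
  fun p => if p.2 = 0 then ‖(z p.1).1‖ else ‖(z p.1).2‖

lemma sum_absVec_sq (z : CVec n) : ∑ p, absVec z p ^ 2 = cNormSq z := by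
  rw [Fintype.sum_prod_type, cNormSq]
  exact Finset.sum_congr rfl fun j _ => by rw [Fin.sum_univ_two]; simp [absVec]

lemma sum_absVec_mul (z w : CVec n) : ∑ p, absVec z p * absVec w p
    = ∑ j, (‖(z j).1‖ * ‖(w j).1‖
          + ‖(z j).2‖ * ‖(w j).2‖) := by
  rw [Fintype.sum_prod_type]
  exact Finset.sum_congr rfl fun j _ => by rw [Fin.sum_univ_two]; simp [absVec]

lemma cs_pairs (z w : CVec n) :
    ∑ j, (‖(z j).1‖ * ‖(w j).1‖
        + ‖(z j).2‖ * ‖(w j).2‖) ≤ cNorm z * cNorm w := by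
  rw [← sum_absVec_mul]
  have h := cs (absVec z) (absVec w)
  rwa [sum_absVec_sq, sum_absVec_sq] at h

lemma actionDist_est (z w : CVec n) (I0 : Fin n → ℝ) :
    cActionDist z I0 ≤ cActionDist w I0 + cNorm w * cNorm (z - w) + cNorm (z - w) ^ 2 / 2 := by
  have key : ∀ j, ‖(cAction z j - (I0 j : ℂ))‖ ≤
      ‖(cAction w j - (I0 j : ℂ))‖
      + (‖(w j).1‖ * ‖((z - w) j).1‖
        + ‖(w j).2‖ * ‖((z - w) j).2‖)
      + (‖((z - w) j).1‖ ^ 2 + ‖((z - w) j).2‖ ^ 2) / 2 := by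
    intro j
    have hz1 : ((z - w) j).1 = (z j).1 - (w j).1 := rfl
    have hz2 : ((z - w) j).2 = (z j).2 - (w j).2 := rfl
    have e : cAction z j - (I0 j : ℂ) = (cAction w j - (I0 j : ℂ))
        + ((w j).1 * ((z - w) j).1 + (w j).2 * ((z - w) j).2)
        + (((z - w) j).1 ^ 2 + ((z - w) j).2 ^ 2) / 2 := by
      rw [hz1, hz2, cAction, cAction]; ring
    rw [e]
    have t1 : ‖((w j).1 * ((z - w) j).1 + (w j).2 * ((z - w) j).2)‖
        ≤ ‖(w j).1‖ * ‖((z - w) j).1‖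
          + ‖(w j).2‖ * ‖((z - w) j).2‖ :=
      le_trans (norm_add_le _ _) (by simp [map_mul])
    have t2 : ‖((((z - w) j).1 ^ 2 + ((z - w) j).2 ^ 2) / 2)‖
        ≤ (‖((z - w) j).1‖ ^ 2 + ‖((z - w) j).2‖ ^ 2) / 2 := by
      rw [norm_div, Complex.norm_two]
      have h3 := norm_add_le (((z - w) j).1 ^ 2) (((z - w) j).2 ^ 2)
      simp only [norm_pow] at h3
      linarith
    exact le_trans (norm_add_le _ _)
      (add_le_add (le_trans (norm_add_le _ _) (add_le_add le_rfl t1)) t2)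
  calc cActionDist z I0 ≤ ∑ j, (‖(cAction w j - (I0 j : ℂ))‖
      + (‖(w j).1‖ * ‖((z - w) j).1‖
        + ‖(w j).2‖ * ‖((z - w) j).2‖)
      + (‖((z - w) j).1‖ ^ 2 + ‖((z - w) j).2‖ ^ 2) / 2) :=
        Finset.sum_le_sum fun j _ => key j
    _ = cActionDist w I0
        + (∑ j, (‖(w j).1‖ * ‖((z - w) j).1‖
          + ‖(w j).2‖ * ‖((z - w) j).2‖))
        + cNormSq (z - w) / 2 := by
          rw [Finset.sum_add_distrib, Finset.sum_add_distrib, cActionDist, cNormSq,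
            ← Finset.sum_div]
    _ ≤ cActionDist w I0 + cNorm w * cNorm (z - w) + cNorm (z - w) ^ 2 / 2 := by
          have h1 := cs_pairs w (z - w)
          have h2 : cNormSq (z - w) = cNorm (z - w) ^ 2 := by
            rw [cNorm, Real.sq_sqrt]
            exact Finset.sum_nonneg fun j _ => by positivity
          linarith

lemma num_delta_rho (m εT r1 r2 : ℝ) (hm1 : 1 ≤ m) (hε : 0 < εT) (hr1 : 0 < r1)
    (hr2 : 0 < r2) (h : m ^ 2 * εT < 1 / 2592 * r1 ^ 2 / r2 ^ 2) :
    36 * (18 * m * r2 / r1 * εT) < r1 / (4 * r2) := by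
  rw [lt_div_iff₀ (by positivity : (0:ℝ) < r2 ^ 2)] at h
  rw [show 36 * (18 * m * r2 / r1 * εT) = 648 * m * r2 * εT / r1 by field_simp; ring,
    div_lt_div_iff₀ hr1 (by positivity : (0:ℝ) < 4 * r2)]
  have h2 : m * εT ≤ m ^ 2 * εT := by
    nlinarith [mul_nonneg (mul_nonneg (sub_nonneg.2 hm1) (by linarith : (0:ℝ) ≤ m)) hε.le]
  have h3 : m * εT * r2 ^ 2 ≤ m ^ 2 * εT * r2 ^ 2 :=
    mul_le_mul_of_nonneg_right h2 (sq_nonneg r2)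
  nlinarith [h, h3]

end CovAux

set_option maxHeartbeats 2000000 in
/-- **Covering property of the normalizing transformation (`z`-only case).** Under the
hypotheses of the local stability lemma in the large-`κ` case, the real analytic
symplectic transformation `Ψ : D_{2r} → D_{3r}` with `|Ψ − id|_{2r} ≤ (18mr₂/r₁)εT`
covers: `Ψ(D^{real}_{5r/3}) ⊇ D^{real}_r`. -/
theorem covering_normalizing_map_z (n : ℕ) (ω I0 : Fin n → ℝ)
    (A : Matrix (Fin n) (Fin n) ℝ) (M T ε : ℝ) (r : ℝ × ℝ) (m : ℕ)
    (Ψ : CVec n → CVec n)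
    (hA : A.IsSymm) (hM : 0 < M) (hT : 0 < T) (hε : 0 < ε) (hm : 0 < m)
    (hr : 0 < r.1 ∧ 0 < r.2)
    (hconv : ∀ I : Fin n → ℝ, (1 / M) * (l1Norm I) ^ 2 ≤ ∑ i, ∑ j, A i j * I i * I j)
    (hper : ∀ j, ∃ mz : ℤ, T * ω j = 2 * Real.pi * mz)
    -- hypotheses of the local stability lemma
    (hs1 : r.1 < r.2 ^ 2 / 4)
    (hs2 : ε * M < r.1 ^ 2 / 2200)
    (hs3 : l1Norm I0 < r.2 ^ 2 / 16)
    (hs4 : 54 * m * l1OpNorm A * r.1 * T ≤ 1 / 4)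
    (hs5 : (m : ℝ) ^ 2 * ε * T <
      min (1 / 2592) (1 / (120 * Real.sqrt (M * l1OpNorm A))) * r.1 ^ 2 / r.2 ^ 2)
    -- Ψ is the real analytic symplectic transformation from the normal form lemma
    (hΨana : AnalyticOnNhd ℂ Ψ (DomZ I0 (2 * r.1, 2 * r.2)))
    (hΨmaps : Set.MapsTo Ψ (DomZ I0 (2 * r.1, 2 * r.2)) (DomZ I0 (3 * r.1, 3 * r.2)))
    (hΨreal : ∀ z ∈ DomZ I0 (2 * r.1, 2 * r.2), IsRealVec z → IsRealVec (Ψ z))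
    (hΨsymp : IsSymplecticOnZ Ψ (DomZ I0 (2 * r.1, 2 * r.2)))
    (hΨid : ∀ z ∈ DomZ I0 (2 * r.1, 2 * r.2),
      cNorm (Ψ z - z) ≤ 18 * m * r.2 / r.1 * (ε * T)) :
    ∀ w : CVec n, IsRealVec w → w ∈ DomZ I0 r →
      ∃ z : CVec n, IsRealVec z ∧ z ∈ DomZ I0 (5 / 3 * r.1, 5 / 3 * r.2) ∧ Ψ z = w := by
  classical
  intro w hwreal hw
  obtain ⟨hr1, hr2⟩ := hr
  obtain ⟨hw1, hw2⟩ := hw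
  open CovAux in
  set δ : ℝ := 18 * m * r.2 / r.1 * (ε * T) with hδdef
  set ρ : ℝ := r.1 / (4 * r.2) with hρdef
  have hmpos : (0:ℝ) < m := by exact_mod_cast hm
  have hm1 : (1:ℝ) ≤ m := by exact_mod_cast hm
  have hδpos : 0 < δ := by rw [hδdef]; positivity
  have hρpos : 0 < ρ := by rw [hρdef]; positivity
  have hρr1 : 4 * ρ * r.2 = r.1 := by rw [hρdef]; field_simp
  have hρr2 : 16 * ρ < r.2 := by
    rw [hρdef]
    rw [show (16:ℝ) * (r.1 / (4 * r.2)) = 4 * r.1 / r.2 by field_simp; ring,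
      div_lt_iff₀ hr2]
    nlinarith [hs1, hr2]
  have hδρ : 36 * δ < ρ := by
    have hmin : min (1/2592 : ℝ) (1 / (120 * Real.sqrt (M * l1OpNorm A))) ≤ 1/2592 :=
      min_le_left _ _
    have h5 : (m:ℝ)^2 * (ε * T) < 1/2592 * r.1^2 / r.2^2 := by
      rw [show (m:ℝ)^2 * (ε * T) = (m:ℝ)^2 * ε * T by ring]
      refine lt_of_lt_of_le hs5 ?_
      gcongr
    rw [hδdef, hρdef]
    exact num_delta_rho (m:ℝ) (ε * T) r.1 r.2 hm1 (mul_pos hε hT) hr1 hr2 h5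
  -- all points within 2ρ of w lie in the domain D_{2r}
  have ballIncl : ∀ v : CVec n, cNorm (v - w) < 2 * ρ → v ∈ DomZ I0 (2 * r.1, 2 * r.2) := by
    intro v hv
    constructor
    · show cActionDist v I0 < 2 * r.1
      have h := actionDist_est v w I0
      have ha : cNorm w * cNorm (v - w) ≤ r.2 * (2 * ρ) :=
        mul_le_mul hw2.le hv.le (cNorm_nonneg _) hr2.le
      have hb : cNorm (v - w) ^ 2 ≤ (2 * ρ) ^ 2 :=
        pow_le_pow_left₀ (cNorm_nonneg _) hv.le 2
      have h4 : ρ * (16 * ρ) ≤ ρ * r.2 := mul_le_mul_of_nonneg_left hρr2.le hρpos.le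
      linarith [h, ha, hb, hw1, hρr1, h4]
    · show cNorm v < 2 * r.2
      have h := cNorm_le_add_sub v w
      have : cNorm v < r.2 + 2 * ρ := by linarith [hw2]
      linarith [hρr2, hρpos]
  have hwD : w ∈ DomZ I0 (2 * r.1, 2 * r.2) := by
    refine ballIncl w ?_
    rw [sub_self, cNorm_zero]
    positivity
  have hδbound : ∀ z ∈ DomZ I0 (2 * r.1, 2 * r.2), cNorm (Ψ z - z) ≤ δ := by
    intro z hz; rw [hδdef]; exact hΨid z hz
  -- Lipschitz-type estimate for F = Ψ - id on the 2δ-ball around w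
  have hF : ∀ z₁ z₂ : CVec n, cNorm (z₁ - w) ≤ 2 * δ → cNorm (z₂ - w) ≤ 2 * δ →
      cNorm (z₁ - z₂) < ρ →
      cNorm ((Ψ z₁ - z₁) - (Ψ z₂ - z₂)) ≤ 4 * δ / ρ * cNorm (z₁ - z₂) := by
    intro z₁ z₂ h₁ h₂ hd
    by_cases hzz : z₁ = z₂
    · subst hzz
      have e1 : Ψ z₁ - z₁ - (Ψ z₁ - z₁) = 0 := sub_self _
      have e2 : z₁ - z₁ = (0 : CVec n) := sub_self _
      rw [e1, e2, cNorm_zero, mul_zero]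
    have hune : z₁ - z₂ ≠ 0 := sub_ne_zero.2 hzz
    have hdpos : 0 < cNorm (z₁ - z₂) := cNorm_pos _ hune
    set u := z₁ - z₂ with hu
    set d := cNorm u with hdd
    set R := ρ / d with hR
    have hR1 : 1 < R := (one_lt_div hdpos).2 hd
    have hmem : ∀ t : ℂ, t ∈ Metric.ball (0:ℂ) R → z₂ + t • u ∈ DomZ I0 (2 * r.1, 2 * r.2) := by
      intro t ht
      apply ballIncl
      have e : z₂ + t • u - w = (z₂ - w) + t • u := by abel
      rw [e]
      have h3 := cNorm_add_le (z₂ - w) (t • u)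
      have h4 : cNorm (t • u) = ‖t‖ * d := cNorm_smul t u
      have h5 : ‖t‖ * d < ρ := by
        have h6 : ‖t‖ < R := by
          simpa [Complex.dist_eq] using ht
        calc ‖t‖ * d < R * d := by
              exact mul_lt_mul_of_pos_right h6 hdpos
          _ = ρ := by rw [hR]; field_simp
      linarith [h₂, hδρ, hδpos]
    set g : ℂ → EuclideanSpace ℂ (Fin n × Fin 2) :=
      fun t => E n (Ψ (z₂ + t • u) - (z₂ + t • u)) with hg
    have hgdiff : DifferentiableOn ℂ g (Metric.ball (0:ℂ) R) := by
      intro t ht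
      apply DifferentiableAt.differentiableWithinAt
      have hline : DifferentiableAt ℂ (fun s : ℂ => z₂ + s • u) t :=
        (differentiableAt_const _).add (differentiableAt_id.smul_const u)
      have hΨd : DifferentiableAt ℂ Ψ (z₂ + t • u) := (hΨana _ (hmem t ht)).differentiableAt
      exact ((E n).differentiable.differentiableAt).comp t ((hΨd.comp t hline).sub hline)
    have hg0 : g 0 = E n (Ψ z₂ - z₂) := by
      rw [hg]; simp
    have hmaps : Set.MapsTo g (Metric.ball (0:ℂ) R) (Metric.ball (g 0) (4 * δ)) := by
      intro t ht
      rw [Metric.mem_ball, dist_eq_norm]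
      have e1 : g t - g 0 = E n ((Ψ (z₂ + t • u) - (z₂ + t • u)) - (Ψ z₂ - z₂)) := by
        rw [hg0, hg, ← map_sub]
      rw [e1, ← cNorm_eq]
      have hb1 : cNorm (Ψ (z₂ + t • u) - (z₂ + t • u)) ≤ δ := hδbound _ (hmem t ht)
      have hb2 : cNorm (Ψ z₂ - z₂) ≤ δ := by
        refine hδbound _ (ballIncl z₂ ?_)
        linarith [h₂, hδρ, hδpos]
      calc cNorm ((Ψ (z₂ + t • u) - (z₂ + t • u)) - (Ψ z₂ - z₂))
          ≤ cNorm (Ψ (z₂ + t • u) - (z₂ + t • u)) + cNorm (Ψ z₂ - z₂) := cNorm_sub_le _ _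
        _ < 4 * δ := by linarith [hδpos]
    have h1mem : (1:ℂ) ∈ Metric.ball (0:ℂ) R := by
      simp only [Metric.mem_ball, Complex.dist_eq, sub_zero, norm_one]
      exact hR1
    have hkey := Complex.dist_le_div_mul_dist_of_mapsTo_ball hgdiff (hmaps.mono_right Metric.ball_subset_closedBall) h1mem
    have e2 : g 1 = E n (Ψ z₁ - z₁) := by
      rw [hg]
      norm_num [hu]
    have e3 : dist (g 1) (g 0) = cNorm ((Ψ z₁ - z₁) - (Ψ z₂ - z₂)) := by
      rw [e2, hg0, dist_eq_norm, ← map_sub, ← cNorm_eq]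
    have e4 : dist (1:ℂ) 0 = 1 := by
      simp [Complex.dist_eq]
    rw [e3, e4, mul_one] at hkey
    calc cNorm ((Ψ z₁ - z₁) - (Ψ z₂ - z₂)) ≤ 4 * δ / R := hkey
      _ = 4 * δ / ρ * d := by rw [hR, div_div_eq_mul_div]; ring
  -- the iteration
  set G : CVec n → CVec n := fun z => z + (w - Ψ z) with hG
  set seq : ℕ → CVec n := fun k => G^[k] w with hseq
  have hseq0 : seq 0 = w := rfl
  have hseqS : ∀ k, seq (k + 1) = G (seq k) := fun k => Function.iterate_succ_apply' G k w
  have main : ∀ k, cNorm (seq (k+1) - seq k) ≤ δ * (1/2)^k ∧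
      cNorm (seq k - w) ≤ 2 * δ * (1 - (1/2)^k) ∧ IsRealVec (seq k) := by
    intro k
    induction k with
    | zero =>
      refine ⟨?_, ?_, ?_⟩
      · rw [hseqS 0, hseq0]
        have e : G w - w = -(Ψ w - w) := by rw [hG]; show w + (w - Ψ w) - w = _; abel
        rw [e, cNorm_neg, pow_zero, mul_one]
        exact hδbound w hwD
      · rw [hseq0, sub_self, cNorm_zero]
        norm_num
      · rw [hseq0]; exact hwreal
    | succ k ih =>
      obtain ⟨ih1, ih2, ih3⟩ := ih
      have hkw : cNorm (seq (k+1) - w) ≤ 2 * δ * (1 - (1/2)^(k+1)) := by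
        have e : seq (k+1) - w = (seq (k+1) - seq k) + (seq k - w) := by abel
        rw [e, pow_succ]
        refine le_trans (cNorm_add_le _ _) ?_
        linarith [ih1, ih2]
      have hpow1 : ((1:ℝ)/2)^(k+1) ≤ 1 := pow_le_one₀ (by norm_num) (by norm_num)
      have hpow0 : (0:ℝ) < ((1:ℝ)/2)^(k+1) := by positivity
      have hpk1 : ((1:ℝ)/2)^k ≤ 1 := pow_le_one₀ (by norm_num) (by norm_num)
      have hpk0 : (0:ℝ) < ((1:ℝ)/2)^k := by positivity
      have hq1 : 0 ≤ δ * (1/2)^(k+1) := mul_nonneg hδpos.le hpow0.le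
      have hq0 : 0 ≤ δ * (1/2)^k := mul_nonneg hδpos.le hpk0.le
      have hmem1 : cNorm (seq (k+1) - w) ≤ 2 * δ := by linarith [hkw, hq1]
      have hmem2 : cNorm (seq k - w) ≤ 2 * δ := by linarith [ih2, hq0]
      have hDmem2 : seq k ∈ DomZ I0 (2 * r.1, 2 * r.2) :=
        ballIncl _ (lt_of_le_of_lt hmem2 (by linarith [hδρ, hδpos]))
      refine ⟨?_, hkw, ?_⟩
      · have hs1' : seq (k+1) = seq k + (w - Ψ (seq k)) := hseqS k
        have hs2' : seq (k+1+1) = seq (k+1) + (w - Ψ (seq (k+1))) := hseqS (k+1)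
        have e : seq (k+1+1) - seq (k+1)
            = -((Ψ (seq (k+1)) - seq (k+1)) - (Ψ (seq k) - seq k)) := by
          rw [hs2', hs1']
          abel
        rw [e, cNorm_neg]
        have hdist : cNorm (seq (k+1) - seq k) < ρ := by
          have := mul_le_of_le_one_right hδpos.le hpk1
          exact lt_of_le_of_lt ih1 (lt_of_le_of_lt this (by linarith [hδρ, hδpos]))
        have hstep := hF (seq (k+1)) (seq k) hmem1 hmem2 hdist
        have hfrac : 4 * δ / ρ ≤ 1/2 := by
          rw [div_le_iff₀ hρpos]; linarith [hδρ, hδpos]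
        calc cNorm ((Ψ (seq (k+1)) - seq (k+1)) - (Ψ (seq k) - seq k))
            ≤ 4 * δ / ρ * cNorm (seq (k+1) - seq k) := hstep
          _ ≤ (1/2) * (δ * (1/2)^k) := by
              refine mul_le_mul hfrac ih1 (cNorm_nonneg _) (by norm_num)
          _ = δ * (1/2)^(k+1) := by ring
      · rw [hseqS k]
        have hΨr := hΨreal (seq k) hDmem2 ih3
        intro j
        have e1 : (G (seq k) j).1 = (seq k j).1 + ((w j).1 - (Ψ (seq k) j).1) := rfl
        have e2 : (G (seq k) j).2 = (seq k j).2 + ((w j).2 - (Ψ (seq k) j).2) := rfl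
        constructor
        · rw [e1]
          simp [Complex.add_im, Complex.sub_im, (ih3 j).1, (hwreal j).1, (hΨr j).1]
        · rw [e2]
          simp [Complex.add_im, Complex.sub_im, (ih3 j).2, (hwreal j).2, (hΨr j).2]
  -- convergence of the iteration
  have hcauchy : CauchySeq seq := by
    refine cauchySeq_of_le_geometric (1/2) δ (by norm_num) fun k => ?_
    rw [dist_eq_norm]
    calc ‖seq k - seq (k+1)‖ ≤ cNorm (seq k - seq (k+1)) := norm_le_cNorm _
      _ = cNorm (seq (k+1) - seq k) := by
          rw [show seq k - seq (k+1) = -(seq (k+1) - seq k) by abel, cNorm_neg]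
      _ ≤ δ * (1/2)^k := (main k).1
  obtain ⟨z, hz⟩ := cauchySeq_tendsto_of_complete hcauchy
  have hcNorm_cont : Continuous fun v : CVec n => cNorm (v - w) := by
    have e : (fun v : CVec n => cNorm (v - w)) = fun v => ‖E n (v - w)‖ :=
      funext fun v => cNorm_eq _
    rw [e]
    exact ((E n).continuous.comp (continuous_id.sub continuous_const)).norm
  have hzw : cNorm (z - w) ≤ 2 * δ := by
    refine le_of_tendsto ((hcNorm_cont.tendsto z).comp hz)
      (Filter.Eventually.of_forall fun k => ?_)
    have h := (main k).2.1
    have hp : (0:ℝ) ≤ δ * ((1:ℝ)/2)^k := mul_nonneg hδpos.le (by positivity)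
    show cNorm (seq k - w) ≤ 2 * δ
    linarith [h, hp]
  have hzρ : cNorm (z - w) < 2 * ρ := lt_of_le_of_lt hzw (by linarith [hδρ, hδpos])
  have hzD2 : z ∈ DomZ I0 (2 * r.1, 2 * r.2) := ballIncl z hzρ
  have hzreal : IsRealVec z := by
    intro j
    constructor
    · have hc : Continuous fun v : CVec n => ((v j).1).im :=
        Complex.continuous_im.comp ((continuous_apply j).fst)
      have ht : Filter.Tendsto (fun k => ((seq k j).1).im) Filter.atTop (nhds (((z j).1).im)) :=
        (hc.tendsto z).comp hz
      have e : (fun k => ((seq k j).1).im) = fun _ => (0:ℝ) :=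
        funext fun k => ((main k).2.2 j).1
      rw [e] at ht
      exact (tendsto_nhds_unique ht tendsto_const_nhds)
    · have hc : Continuous fun v : CVec n => ((v j).2).im :=
        Complex.continuous_im.comp ((continuous_apply j).snd)
      have ht : Filter.Tendsto (fun k => ((seq k j).2).im) Filter.atTop (nhds (((z j).2).im)) :=
        (hc.tendsto z).comp hz
      have e : (fun k => ((seq k j).2).im) = fun _ => (0:ℝ) :=
        funext fun k => ((main k).2.2 j).2
      rw [e] at ht
      exact (tendsto_nhds_unique ht tendsto_const_nhds)
  have hΨz : Ψ z = w := by
    have hzc : ContinuousAt Ψ z := (hΨana z hzD2).continuousAt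
    have h1 : Filter.Tendsto (fun k => seq (k+1)) Filter.atTop (nhds z) :=
      hz.comp (Filter.tendsto_add_atTop_nat 1)
    have h2 : Filter.Tendsto (fun k => seq k + (w - Ψ (seq k))) Filter.atTop
        (nhds (z + (w - Ψ z))) :=
      hz.add (tendsto_const_nhds.sub (hzc.tendsto.comp hz))
    have h3 : (fun k => seq (k+1)) = fun k => seq k + (w - Ψ (seq k)) :=
      funext fun k => by rw [hseqS k, hG]
    rw [h3] at h1
    have h4 := tendsto_nhds_unique h1 h2
    have h5 : w - Ψ z = 0 := by
      have h6 : z + 0 = z + (w - Ψ z) := by rw [add_zero]; exact h4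
      exact (add_left_cancel h6).symm
    have := sub_eq_zero.mp h5
    exact this.symm
  refine ⟨z, hzreal, ⟨?_, ?_⟩, hΨz⟩
  · show cActionDist z I0 < 5/3 * r.1
    have h := actionDist_est z w I0
    have ha : cNorm w * cNorm (z - w) ≤ r.2 * (2 * δ) :=
      mul_le_mul hw2.le hzw (cNorm_nonneg _) hr2.le
    have hb : cNorm (z - w) ^ 2 ≤ (2 * δ) ^ 2 :=
      pow_le_pow_left₀ (cNorm_nonneg _) hzw 2
    have h1 : r.2 * (36 * δ) ≤ r.2 * ρ := mul_le_mul_of_nonneg_left hδρ.le hr2.le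
    have h2 : δ * (36 * δ) ≤ δ * ρ := mul_le_mul_of_nonneg_left hδρ.le hδpos.le
    have h3 : ρ * (36 * δ) ≤ ρ * ρ := mul_le_mul_of_nonneg_left hδρ.le hρpos.le
    have h4 : ρ * (16 * ρ) ≤ ρ * r.2 := mul_le_mul_of_nonneg_left hρr2.le hρpos.le
    linarith [h, ha, hb, hw1, hρr1, h1, h2, h3, h4]
  · show cNorm z < 5/3 * r.2
    have h := cNorm_le_add_sub z w
    have : cNorm z < r.2 + 2 * δ := by linarith [hw2]
    linarith [hδρ, hρr2, hρpos, hδpos]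
end
end

section
/- Covering property of the normalizing transformation (coupled case). Under the hypotheses of the stability lemma in the small-κ case, the real analytic symplectic transformation Ψ: D_{2r}→D_{3r} produced by the normal form lemma (with |Ψ−id|_{2r} ≤ μ = (18mr₂/r₁)εT) satisfies Ψ(D^{real}_{5r/3}) ⊇ D^{real}_r, where D^{real}_r = D_r ∩ (ℝ^{2n}×ℝ^{2N}). -/
noncomputable section

open scoped BigOperators
open Real

/-- The coupled domain `D_{r₁,r₂,r₃} ⊆ ℂ^{2n} × ℂ^{2N}`. -/
def Dom {n N : ℕ} (I0 : Fin n → ℝ) (r : ℝ × ℝ × ℝ) : Set (CVec n × CVec N) :=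
  {p | cActionDist p.1 I0 < r.1 ∧ cNorm p.1 < r.2.1 ∧ cNorm p.2 < r.2.2}

/-- Euclidean norm on a product `ℂ^{2n} × ℂ^{2N}`. -/
def pNorm {n N : ℕ} (p : CVec n × CVec N) : ℝ := Real.sqrt (cNormSq p.1 + cNormSq p.2)

/-- The standard symplectic form on `ℂ^{2n} × ℂ^{2N}`. -/
def symForm {n N : ℕ} (u v : CVec n × CVec N) : ℂ :=
  (∑ j, ((u.1 j).1 * (v.1 j).2 - (u.1 j).2 * (v.1 j).1))
  + ∑ j : Fin N, ((u.2 j).1 * (v.2 j).2 - (u.2 j).2 * (v.2 j).1)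

/-- A transformation is symplectic on `s` if its derivative preserves the symplectic form. -/
def IsSymplecticOn {n N : ℕ} (Φ : CVec n × CVec N → CVec n × CVec N)
    (s : Set (CVec n × CVec N)) : Prop :=
  ∀ p ∈ s, ∀ u v, symForm (fderiv ℂ Φ p u) (fderiv ℂ Φ p v) = symForm u v


namespace CoveringAux

/-- Euclidean embedding of `CVec n`. -/
def eC {n : ℕ} (z : CVec n) : EuclideanSpace ℂ (Fin n ⊕ Fin n) :=
  (WithLp.equiv 2 _).symm (Sum.elim (fun j => (z j).1) (fun j => (z j).2))

variable {n N : ℕ}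

lemma eC_apply_inl (z : CVec n) (j : Fin n) : eC z (Sum.inl j) = (z j).1 := rfl
lemma eC_apply_inr (z : CVec n) (j : Fin n) : eC z (Sum.inr j) = (z j).2 := rfl

lemma cNorm_eq (z : CVec n) : cNorm z = ‖eC z‖ := by
  rw [cNorm, EuclideanSpace.norm_eq, cNormSq]
  congr 1
  rw [Fintype.sum_sum_type, ← Finset.sum_add_distrib]
  simp [eC_apply_inl, eC_apply_inr]

lemma eC_add (a b : CVec n) : eC (a + b) = eC a + eC b := by
  ext i; rcases i with j | j <;> rfl

lemma eC_sub (a b : CVec n) : eC (a - b) = eC a - eC b := by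
  ext i; rcases i with j | j <;> rfl

lemma cNorm_nonneg (z : CVec n) : 0 ≤ cNorm z := Real.sqrt_nonneg _

lemma cNorm_add_le (a b : CVec n) : cNorm (a + b) ≤ cNorm a + cNorm b := by
  rw [cNorm_eq, cNorm_eq, cNorm_eq, eC_add]; exact norm_add_le _ _

lemma cNorm_sub_le' (a b : CVec n) : cNorm a ≤ cNorm b + cNorm (a - b) := by
  have : a = b + (a - b) := by abel
  nth_rewrite 1 [this]; exact cNorm_add_le _ _

/-- Euclidean embedding of the product. -/
def ι (p : CVec n × CVec N) :
    EuclideanSpace ℂ ((Fin n ⊕ Fin n) ⊕ (Fin N ⊕ Fin N)) :=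
  (WithLp.equiv 2 _).symm (Sum.elim (eC p.1) (eC p.2))

def ιL (n N : ℕ) : (CVec n × CVec N) →L[ℂ]
    EuclideanSpace ℂ ((Fin n ⊕ Fin n) ⊕ (Fin N ⊕ Fin N)) :=
  LinearMap.toContinuousLinearMap
  { toFun := ι
    map_add' := fun a b => by
      ext i; rcases i with (j | j) | (j | j) <;> rfl
    map_smul' := fun t a => by
      ext i; rcases i with (j | j) | (j | j) <;> rfl }

lemma ιL_apply (p : CVec n × CVec N) : ιL n N p = ι p := rfl

lemma pNorm_eq (p : CVec n × CVec N) : pNorm p = ‖ι p‖ := by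
  rw [pNorm, EuclideanSpace.norm_eq, Fintype.sum_sum_type]
  congr 1
  have h1 : cNormSq p.1 = ∑ a : Fin n ⊕ Fin n, ‖ι p (Sum.inl a)‖ ^ 2 := by
    rw [cNormSq, Fintype.sum_sum_type, ← Finset.sum_add_distrib]
    simp [ι, eC_apply_inl, eC_apply_inr]
  have h2 : cNormSq p.2 = ∑ a : Fin N ⊕ Fin N, ‖ι p (Sum.inr a)‖ ^ 2 := by
    rw [cNormSq, Fintype.sum_sum_type, ← Finset.sum_add_distrib]
    simp [ι, eC_apply_inl, eC_apply_inr]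
  rw [h1, h2]

lemma pNorm_nonneg' (p : CVec n × CVec N) : 0 ≤ pNorm p := Real.sqrt_nonneg _

lemma pNorm_sub_le (a b c : CVec n × CVec N) :
    pNorm (a - c) ≤ pNorm (a - b) + pNorm (b - c) := by
  rw [pNorm_eq, pNorm_eq, pNorm_eq, ← ιL_apply, ← ιL_apply, ← ιL_apply,
    map_sub, map_sub, map_sub]
  exact norm_sub_le_norm_sub_add_norm_sub _ _ _

lemma pNorm_neg (a : CVec n × CVec N) : pNorm (-a) = pNorm a := by
  rw [pNorm_eq, pNorm_eq, ← ιL_apply, ← ιL_apply, map_neg, norm_neg]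

lemma pNorm_sub_comm (a b : CVec n × CVec N) : pNorm (a - b) = pNorm (b - a) := by
  rw [← neg_sub b a, pNorm_neg]

lemma cNormSq_nonneg (z : CVec n) : 0 ≤ cNormSq z :=
  Finset.sum_nonneg fun j _ => add_nonneg (sq_nonneg _) (sq_nonneg _)

lemma cNorm_fst_le (p : CVec n × CVec N) : cNorm p.1 ≤ pNorm p := by
  rw [cNorm, pNorm]
  exact Real.sqrt_le_sqrt (le_add_of_nonneg_right (cNormSq_nonneg _))

lemma cNorm_snd_le (p : CVec n × CVec N) : cNorm p.2 ≤ pNorm p := by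
  rw [cNorm, pNorm]
  exact Real.sqrt_le_sqrt (le_add_of_nonneg_left (cNormSq_nonneg _))

lemma sum_mul_le_sqrt {ι' : Type*} [Fintype ι'] (f g : ι' → ℝ)
    (hf : ∀ i, 0 ≤ f i) (hg : ∀ i, 0 ≤ g i) :
    ∑ i, f i * g i ≤ Real.sqrt (∑ i, f i ^ 2) * Real.sqrt (∑ i, g i ^ 2) := by
  have h := Finset.sum_mul_sq_le_sq_mul_sq Finset.univ f g
  have h0 : (0:ℝ) ≤ ∑ i, f i * g i :=
    Finset.sum_nonneg fun i _ => mul_nonneg (hf i) (hg i)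
  calc ∑ i, f i * g i = Real.sqrt ((∑ i, f i * g i) ^ 2) := (Real.sqrt_sq h0).symm
    _ ≤ Real.sqrt ((∑ i, f i ^ 2) * (∑ i, g i ^ 2)) := Real.sqrt_le_sqrt h
    _ = _ := Real.sqrt_mul (Finset.sum_nonneg fun i _ => sq_nonneg _) _

/-- Quadratic estimate for the action distance. -/
lemma actionDist_le (u v : CVec n) (I0 : Fin n → ℝ) :
    cActionDist u I0 ≤ cActionDist v I0 + cNorm (u - v) * (cNorm u + cNorm v) / 2 := by
  have key : ∑ j, ‖cAction u j - cAction v j‖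
      ≤ cNorm (u - v) * (cNorm u + cNorm v) / 2 := by
    have step1 : ∀ j, ‖cAction u j - cAction v j‖ ≤
        (‖(u j).1 - (v j).1‖ * ‖(u j).1 + (v j).1‖
          + ‖(u j).2 - (v j).2‖ * ‖(u j).2 + (v j).2‖) / 2 := by
      intro j
      have : cAction u j - cAction v j =
          (((u j).1 - (v j).1) * ((u j).1 + (v j).1)
            + ((u j).2 - (v j).2) * ((u j).2 + (v j).2)) / 2 := by
        rw [cAction, cAction]; ring
      rw [this, norm_div]
      simp only [Complex.norm_ofNat]
      gcongr
      exact (norm_add_le _ _).trans (by rw [norm_mul, norm_mul])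
    calc ∑ j, ‖cAction u j - cAction v j‖
        ≤ ∑ j, (‖(u j).1 - (v j).1‖ * ‖(u j).1 + (v j).1‖
          + ‖(u j).2 - (v j).2‖ * ‖(u j).2 + (v j).2‖) / 2 :=
          Finset.sum_le_sum fun j _ => step1 j
      _ = (∑ i : Fin n ⊕ Fin n,
            ‖eC (u - v) i‖ * ‖eC (u + v) i‖) / 2 := by
          rw [Fintype.sum_sum_type, ← Finset.sum_div, ← Finset.sum_add_distrib]
          congr 1
      _ ≤ (cNorm (u - v) * cNorm (u + v)) / 2 := by
          gcongr
          have := sum_mul_le_sqrt (fun i : Fin n ⊕ Fin n => ‖eC (u - v) i‖)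
            (fun i => ‖eC (u + v) i‖)
            (fun i => norm_nonneg _) (fun i => norm_nonneg _)
          refine this.trans (le_of_eq ?_)
          rw [cNorm_eq, cNorm_eq, EuclideanSpace.norm_eq, EuclideanSpace.norm_eq]
      _ ≤ cNorm (u - v) * (cNorm u + cNorm v) / 2 := by
          gcongr
          · exact cNorm_nonneg _
          · exact cNorm_add_le u v
  calc cActionDist u I0 ≤ ∑ j, (‖cAction u j - cAction v j‖
        + ‖cAction v j - (I0 j : ℂ)‖) := by
        rw [cActionDist]
        refine Finset.sum_le_sum fun j _ => ?_
        have : cAction u j - (I0 j : ℂ) =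
            (cAction u j - cAction v j) + (cAction v j - (I0 j : ℂ)) := by ring
        rw [this]; exact norm_add_le _ _
    _ = (∑ j, ‖cAction u j - cAction v j‖) + cActionDist v I0 := by
        rw [Finset.sum_add_distrib]; rfl
    _ ≤ cActionDist v I0 + cNorm (u - v) * (cNorm u + cNorm v) / 2 := by
        rw [add_comm]; exact add_le_add_right key _

lemma pNorm_zero : pNorm (0 : CVec n × CVec N) = 0 := by
  rw [pNorm_eq, ← ιL_apply, map_zero, norm_zero]

lemma pNorm_add_le (a b : CVec n × CVec N) : pNorm (a + b) ≤ pNorm a + pNorm b := by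
  rw [pNorm_eq, pNorm_eq, pNorm_eq, ← ιL_apply, ← ιL_apply, ← ιL_apply, map_add]
  exact norm_add_le _ _

lemma pNorm_smul (t : ℂ) (a : CVec n × CVec N) :
    pNorm (t • a) = ‖t‖ * pNorm a := by
  rw [pNorm_eq, pNorm_eq, ← ιL_apply, ← ιL_apply, map_smul, norm_smul]

lemma cNormSq_eq_zero {z : CVec n} (h : cNormSq z = 0) : z = 0 := by
  funext j
  have hj := (Finset.sum_eq_zero_iff_of_nonneg
    (fun i _ => add_nonneg (sq_nonneg ‖(z i).1‖) (sq_nonneg _))).mp h j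
    (Finset.mem_univ j)
  have h1 : ‖(z j).1‖ = 0 := by
    nlinarith [norm_nonneg (z j).1, norm_nonneg (z j).2,
      sq_nonneg ‖(z j).1‖, sq_nonneg ‖(z j).2‖]
  have h2 : ‖(z j).2‖ = 0 := by
    nlinarith [norm_nonneg (z j).1, norm_nonneg (z j).2,
      sq_nonneg ‖(z j).1‖, sq_nonneg ‖(z j).2‖]
  have : z j = ((z j).1, (z j).2) := rfl
  rw [this]
  rw [norm_eq_zero] at h1 h2
  rw [h1, h2]; rfl

lemma pNorm_pos {p : CVec n × CVec N} (h : p ≠ 0) : 0 < pNorm p := by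
  rcases (pNorm_nonneg' p).lt_or_eq with h' | h'
  · exact h'
  exfalso
  apply h
  have hz : cNormSq p.1 + cNormSq p.2 = 0 := by
    have := h'.symm
    rw [pNorm] at this
    have h0 : 0 ≤ cNormSq p.1 + cNormSq p.2 :=
      add_nonneg (cNormSq_nonneg _) (cNormSq_nonneg _)
    nlinarith [Real.sq_sqrt h0, this]
  have h1 : cNormSq p.1 = 0 := by
    linarith [cNormSq_nonneg p.1, cNormSq_nonneg p.2]
  have h2 : cNormSq p.2 = 0 := by
    linarith [cNormSq_nonneg p.1, cNormSq_nonneg p.2]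
  exact Prod.ext (cNormSq_eq_zero h1) (cNormSq_eq_zero h2)

lemma coord_le (p : CVec n × CVec N) (i : (Fin n ⊕ Fin n) ⊕ (Fin N ⊕ Fin N)) :
    ‖ι p i‖ ≤ pNorm p := by
  rw [pNorm_eq, EuclideanSpace.norm_eq]
  have h : ‖ι p i‖ = Real.sqrt (‖ι p i‖ ^ 2) := (Real.sqrt_sq (norm_nonneg _)).symm
  rw [h]
  exact Real.sqrt_le_sqrt (Finset.single_le_sum
    (f := fun i => ‖ι p i‖ ^ 2) (fun i _ => sq_nonneg _) (Finset.mem_univ i))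

lemma norm_le_pNorm (p : CVec n × CVec N) : ‖p‖ ≤ pNorm p := by
  rw [Prod.norm_def]
  apply max_le
  · rw [pi_norm_le_iff_of_nonneg (pNorm_nonneg' p)]
    intro j
    rw [Prod.norm_def]
    exact max_le (coord_le p (Sum.inl (Sum.inl j))) (coord_le p (Sum.inl (Sum.inr j)))
  · rw [pi_norm_le_iff_of_nonneg (pNorm_nonneg' p)]
    intro j
    rw [Prod.norm_def]
    exact max_le (coord_le p (Sum.inr (Sum.inl j))) (coord_le p (Sum.inr (Sum.inr j)))

lemma isRealVec_sub {a b : CVec n} (ha : IsRealVec a) (hb : IsRealVec b) :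
    IsRealVec (a - b) := by
  intro j
  refine ⟨?_, ?_⟩
  · show ((a j).1 - (b j).1).im = 0
    rw [Complex.sub_im, (ha j).1, (hb j).1, sub_zero]
  · show ((a j).2 - (b j).2).im = 0
    rw [Complex.sub_im, (ha j).2, (hb j).2, sub_zero]

end CoveringAux

set_option maxHeartbeats 4000000 in
/-- **Covering property of the normalizing transformation (coupled case).** Under the
hypotheses of the small-`κ` stability lemma, the real analytic symplectic transformation
`Ψ : D_{2r} → D_{3r}` with `|Ψ − id|_{2r} ≤ (18mr₂/r₁)εT` covers:
`Ψ(D^{real}_{5r/3}) ⊇ D^{real}_r`. -/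
theorem covering_normalizing_map_coupled (n N : ℕ) (ω I0 : Fin n → ℝ)
    (A : Matrix (Fin n) (Fin n) ℝ) (M T κ ε CΛ : ℝ) (r : ℝ × ℝ × ℝ) (m : ℕ)
    (Ψ : CVec n × CVec N → CVec n × CVec N)
    (hA : A.IsSymm) (hM : 0 < M) (hT : 0 < T) (hκ : 0 < κ) (hε : 0 < ε) (hCΛ : 0 < CΛ)
    (hm : 0 < m) (hr : 0 < r.1 ∧ 0 < r.2.1 ∧ 0 < r.2.2)
    (hconv : ∀ I : Fin n → ℝ, (1 / M) * (l1Norm I) ^ 2 ≤ ∑ i, ∑ j, A i j * I i * I j)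
    (hper : ∀ j, ∃ mz : ℤ, T * ω j = 2 * Real.pi * mz)
    -- hypotheses of the small-κ stability lemma
    (hc1 : r.1 < min (r.2.1 ^ 2 / 4) (2 * r.2.1 * r.2.2))
    (hc2 : ε * M < (1 / 2200) * r.1 ^ 2)
    (hc3 : l1Norm I0 < r.2.1 ^ 2 / 16)
    (hc4 : r.1 ^ 2 ≤ 4 * κ * M * r.2.2 ^ 2)
    (hc5 : 54 * m * l1OpNorm A * r.1 * T ≤ 1 / 6)
    (hc6 : (m : ℝ) ^ 2 * ε * T <
      min (1 / 3888) (1 / (480 * Real.sqrt (M * l1OpNorm A))) * r.1 ^ 2 / r.2.1 ^ 2)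
    (hc7 : CΛ * κ * m * T ≤ r.1 / (54 * r.2.1 * r.2.2))
    -- Ψ is the real analytic symplectic transformation from the normal form lemma
    (hΨana : AnalyticOnNhd ℂ Ψ (Dom I0 (2 * r.1, 2 * r.2.1, 2 * r.2.2)))
    (hΨmaps : Set.MapsTo Ψ (Dom I0 (2 * r.1, 2 * r.2.1, 2 * r.2.2))
      (Dom I0 (3 * r.1, 3 * r.2.1, 3 * r.2.2)))
    (hΨreal : ∀ p ∈ Dom I0 (2 * r.1, 2 * r.2.1, 2 * r.2.2),
      IsRealVec p.1 → IsRealVec p.2 → IsRealVec (Ψ p).1 ∧ IsRealVec (Ψ p).2)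
    (hΨsymp : IsSymplecticOn Ψ (Dom I0 (2 * r.1, 2 * r.2.1, 2 * r.2.2)))
    (hΨid : ∀ p ∈ Dom I0 (2 * r.1, 2 * r.2.1, 2 * r.2.2),
      pNorm (Ψ p - p) ≤ 18 * m * r.2.1 / r.1 * (ε * T)) :
    ∀ w : CVec n × CVec N, IsRealVec w.1 → IsRealVec w.2 → w ∈ Dom I0 r →
      ∃ p : CVec n × CVec N, IsRealVec p.1 ∧ IsRealVec p.2 ∧
        p ∈ Dom I0 (5 / 3 * r.1, 5 / 3 * r.2.1, 5 / 3 * r.2.2) ∧ Ψ p = w := by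
  classical
  open CoveringAux in
  intro w hw1 hw2 hw
  obtain ⟨hr1, hr2, hr3⟩ := hr
  obtain ⟨hwA, hwB, hwC⟩ := hw
  have hm0 : (0:ℝ) < m := by exact_mod_cast hm
  have hm1 : (1:ℝ) ≤ m := by exact_mod_cast hm
  set μ : ℝ := 18 * m * r.2.1 / r.1 * (ε * T) with hμdef
  set ρ : ℝ := r.1 / (8 * r.2.1) with hρdef
  have hμpos : 0 < μ := by rw [hμdef]; positivity
  have hρpos : 0 < ρ := by rw [hρdef]; positivity
  have hc1a : r.1 < r.2.1 ^ 2 / 4 := lt_of_lt_of_le hc1 (min_le_left _ _)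
  have hc1b : r.1 < 2 * r.2.1 * r.2.2 := lt_of_lt_of_le hc1 (min_le_right _ _)
  have hsq : (0:ℝ) < r.2.1 ^ 2 := by positivity
  have h6' : (m:ℝ) ^ 2 * ε * T * r.2.1 ^ 2 ≤ 1 / 3888 * r.1 ^ 2 :=
    ((lt_div_iff₀ hsq).mp hc6).le.trans
      (mul_le_mul_of_nonneg_right (min_le_left _ _) (sq_nonneg _))
  have hmm : (m:ℝ) ≤ (m:ℝ) ^ 2 := le_self_pow₀ hm1 two_ne_zero
  have hμkey : 216 * r.2.1 * μ ≤ r.1 := by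
    have h2 : 216 * r.2.1 * μ = 3888 * ((m:ℝ) * (ε * T)) * r.2.1 ^ 2 / r.1 := by
      rw [hμdef]; field_simp; ring
    rw [h2, div_le_iff₀ hr1]
    have hint := mul_le_mul_of_nonneg_right
      (mul_le_mul_of_nonneg_right hmm (mul_pos hε hT).le) (sq_nonneg r.2.1)
    linarith [hint, h6']
  have hρkey : 8 * r.2.1 * ρ = r.1 := by rw [hρdef]; field_simp
  have hcancel : ∀ a b : ℝ, r.2.1 * a ≤ r.2.1 * b → a ≤ b :=
    fun a b h => le_of_mul_le_mul_left h hr2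
  have hμ2 : μ ≤ r.2.1 / 864 := hcancel _ _ (by linarith [hμkey, hc1a])
  have hρ2 : ρ ≤ r.2.1 / 32 := hcancel _ _ (by linarith [hρkey, hc1a])
  have hμ3 : μ ≤ r.2.2 / 108 := hcancel _ _ (by linarith [hμkey, hc1b])
  have hρ3 : ρ ≤ r.2.2 / 4 := hcancel _ _ (by linarith [hρkey, hc1b])
  -- membership of the enlarged ball in D_{2r}
  have memD2 : ∀ u : CVec n × CVec N, pNorm (u - w) ≤ 6 * μ + ρ →
      u ∈ Dom I0 (2 * r.1, 2 * r.2.1, 2 * r.2.2) := by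
    intro u hu
    have hδ : (0:ℝ) ≤ 6 * μ + ρ := by positivity
    have hA1 : 6 * μ + ρ ≤ r.2.1 := by linarith [hμ2, hρ2, hr2]
    have hA3 : (6 * μ + ρ) * (3 * r.2.1) ≤ 2 * r.1 := by linarith [hμkey, hρkey, hr1]
    have h1 : cNorm (u.1 - w.1) ≤ 6 * μ + ρ := (cNorm_fst_le (u - w)).trans hu
    have h2 : cNorm (u.2 - w.2) ≤ 6 * μ + ρ := (cNorm_snd_le (u - w)).trans hu
    have hnu1 : cNorm u.1 < r.2.1 + (6 * μ + ρ) := by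
      have := cNorm_sub_le' u.1 w.1
      linarith
    have hnu2 : cNorm u.2 < r.2.2 + (6 * μ + ρ) := by
      have := cNorm_sub_le' u.2 w.2
      linarith
    refine ⟨?_, ?_, ?_⟩
    · have e1 := actionDist_le u.1 w.1 I0
      have hprod : cNorm (u.1 - w.1) * (cNorm u.1 + cNorm w.1) ≤
          (6 * μ + ρ) * (3 * r.2.1) := by
        apply mul_le_mul h1 _ _ hδ
        · linarith
        · exact add_nonneg (cNorm_nonneg _) (cNorm_nonneg _)
      show cActionDist u.1 I0 < 2 * r.1
      linarith
    · show cNorm u.1 < 2 * r.2.1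
      linarith
    · show cNorm u.2 < 2 * r.2.2
      have hA2 : 6 * μ + ρ ≤ r.2.2 := by linarith [hμ3, hρ3]
      linarith
  have hball : ∀ u : CVec n × CVec N, pNorm (u - w) ≤ 6 * μ + ρ →
      pNorm (Ψ u - u) ≤ μ := fun u hu => hΨid u (memD2 u hu)
  have h2le : 2 * μ ≤ 6 * μ + ρ := by linarith
  -- Lipschitz estimate for Ψ - id on the real 2μ-ball, via the Schwarz lemma
  have lip : ∀ p q : CVec n × CVec N, pNorm (p - w) ≤ 2 * μ → pNorm (q - w) ≤ 2 * μ →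
      pNorm ((Ψ p - p) - (Ψ q - q)) ≤ 1 / 9 * pNorm (p - q) := by
    intro p q hp hq
    rcases eq_or_ne p q with rfl | hne
    · rw [sub_self, pNorm_zero, sub_self, pNorm_zero]; norm_num
    have hd0 : q - p ≠ 0 := sub_ne_zero_of_ne (Ne.symm hne)
    set d : CVec n × CVec N := q - p with hddef
    set pd : ℝ := pNorm d with hpddef
    have hpdpos : 0 < pd := pNorm_pos hd0
    set R : ℝ := 1 + ρ / pd with hRdef
    have hR1 : 1 < R := by
      rw [hRdef]; linarith [div_pos hρpos hpdpos]
    set u : ℂ → CVec n × CVec N := fun t => p + t • d with hudef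
    set g : ℂ → EuclideanSpace ℂ ((Fin n ⊕ Fin n) ⊕ (Fin N ⊕ Fin N)) :=
      fun t => ιL n N (Ψ (u t) - u t) with hgdef
    have hpd4 : pd ≤ 4 * μ := by
      rw [hpddef, hddef]
      calc pNorm (q - p) ≤ pNorm (q - w) + pNorm (w - p) := pNorm_sub_le q w p
        _ = pNorm (q - w) + pNorm (p - w) := by rw [pNorm_sub_comm w p]
        _ ≤ 2 * μ + 2 * μ := add_le_add hq hp
        _ = 4 * μ := by ring
    have hu_mem : ∀ t : ℂ, t ∈ Metric.ball (0:ℂ) R → pNorm (u t - w) ≤ 6 * μ + ρ := by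
      intro t ht
      have htR : ‖t‖ < R := by
        rw [Metric.mem_ball, dist_zero_right] at ht
        exact ht
      have h1 : u t - w = (p - w) + t • d := by show p + t • d - w = (p - w) + t • d; abel
      have h2 : pNorm (u t - w) ≤ pNorm (p - w) + pNorm (t • d) := by
        rw [h1]; exact pNorm_add_le _ _
      have h3 : pNorm (t • d) = ‖t‖ * pd := pNorm_smul t d
      have hRpd : R * pd = pd + ρ := by
        rw [hRdef]; field_simp
      have h4 : ‖t‖ * pd ≤ R * pd :=
        mul_le_mul_of_nonneg_right htR.le hpdpos.le
      have h5 : pNorm (t • d) ≤ pd + ρ := by rw [h3, ← hRpd]; exact h4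
      linarith
    have hu0 : u 0 = p := by rw [hudef]; simp
    have hu1 : u 1 = q := by rw [hudef]; simp [hddef]
    have hp_mem : pNorm (p - w) ≤ 6 * μ + ρ := hp.trans h2le
    have hgdiff : DifferentiableOn ℂ g (Metric.ball (0:ℂ) R) := by
      intro t ht
      have h1 : DifferentiableAt ℂ u t := by
        rw [hudef]
        exact (differentiableAt_id.smul_const d).const_add p
      have h2 : DifferentiableAt ℂ Ψ (u t) :=
        (hΨana _ (memD2 _ (hu_mem t ht))).differentiableAt
      exact (((ιL n N).differentiable.differentiableAt).comp t
        ((h2.comp t h1).sub h1)).differentiableWithinAt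
    have hgnorm : ∀ t : ℂ, t ∈ Metric.ball (0:ℂ) R → ‖g t‖ ≤ μ := by
      intro t ht
      rw [hgdef]
      show ‖ιL n N (Ψ (u t) - u t)‖ ≤ μ
      rw [ιL_apply, ← pNorm_eq]
      exact hball _ (hu_mem t ht)
    have h0mem : (0:ℂ) ∈ Metric.ball (0:ℂ) R := by
      rw [Metric.mem_ball, dist_self]; linarith
    have h1mem : (1:ℂ) ∈ Metric.ball (0:ℂ) R := by
      rw [Metric.mem_ball, dist_zero_right, norm_one]; exact hR1
    have hmaps : Set.MapsTo g (Metric.ball (0:ℂ) R) (Metric.ball (g 0) (3 * μ)) := by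
      intro t ht
      rw [Metric.mem_ball]
      calc dist (g t) (g 0) ≤ ‖g t‖ + ‖g 0‖ := dist_le_norm_add_norm _ _
        _ ≤ μ + μ := add_le_add (hgnorm t ht) (hgnorm 0 h0mem)
        _ < 3 * μ := by linarith
    have key := Complex.dist_le_div_mul_dist_of_mapsTo_ball hgdiff
        (hmaps.mono_right Metric.ball_subset_closedBall) h1mem
    have hdist : dist (g 1) (g 0) = pNorm ((Ψ p - p) - (Ψ q - q)) := by
      rw [dist_eq_norm, hgdef]
      show ‖ιL n N (Ψ (u 1) - u 1) - ιL n N (Ψ (u 0) - u 0)‖ = _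
      rw [hu0, hu1, ← map_sub, ιL_apply, ← pNorm_eq, pNorm_sub_comm]
    have hd10 : dist (1:ℂ) 0 = 1 := by simp
    rw [hdist, hd10, mul_one] at key
    have h27 : 27 * μ ≤ ρ := hcancel _ _ (by linarith [hμkey, hρkey])
    have hRρ : ρ / pd ≤ R := by rw [hRdef]; linarith
    have hRpos : 0 < R := by linarith
    have hfrac : 3 * μ / R ≤ 3 * μ * pd / ρ := by
      rw [div_le_div_iff₀ hRpos hρpos]
      have hρR : ρ ≤ R * pd := by
        have : (ρ / pd) * pd ≤ R * pd := mul_le_mul_of_nonneg_right hRρ hpdpos.le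
        rwa [div_mul_cancel₀ _ hpdpos.ne'] at this
      have hint := mul_le_mul_of_nonneg_left hρR (by positivity : (0:ℝ) ≤ 3 * μ)
      linarith [hint]
    have hfrac2 : 3 * μ * pd / ρ ≤ 1 / 9 * pd := by
      rw [div_le_iff₀ hρpos]
      have hint := mul_le_mul_of_nonneg_right h27 hpdpos.le
      linarith [hint]
    calc pNorm ((Ψ p - p) - (Ψ q - q)) ≤ 3 * μ / R := key
      _ ≤ 1 / 9 * pd := hfrac.trans hfrac2
      _ = 1 / 9 * pNorm (p - q) := by rw [hpddef, hddef, pNorm_sub_comm]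
  -- the iteration
  set seq : ℕ → CVec n × CVec N :=
    fun k => Nat.rec w (fun _ s => w - (Ψ s - s)) k with hseqdef
  have hseq0 : seq 0 = w := rfl
  have hseqS : ∀ k, seq (k + 1) = w - (Ψ (seq k) - seq k) := fun k => rfl
  have good : ∀ k, (IsRealVec (seq k).1 ∧ IsRealVec (seq k).2) ∧
      pNorm (seq k - w) ≤ 2 * μ := by
    intro k
    induction k with
    | zero =>
      refine ⟨⟨hw1, hw2⟩, ?_⟩
      rw [hseq0, sub_self, pNorm_zero]; positivity
    | succ k ih =>
      have hmemk : seq k ∈ Dom I0 (2 * r.1, 2 * r.2.1, 2 * r.2.2) :=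
        memD2 _ (ih.2.trans h2le)
      have hreal := hΨreal _ hmemk ih.1.1 ih.1.2
      refine ⟨⟨?_, ?_⟩, ?_⟩
      · rw [hseqS]
        exact isRealVec_sub hw1 (isRealVec_sub hreal.1 ih.1.1)
      · rw [hseqS]
        exact isRealVec_sub hw2 (isRealVec_sub hreal.2 ih.1.2)
      · have h1 : seq (k + 1) - w = -(Ψ (seq k) - seq k) := by rw [hseqS]; abel
        rw [h1, pNorm_neg]
        exact (hball _ (ih.2.trans h2le)).trans (by linarith)
  have hstep : ∀ k, pNorm (seq (k + 1) - seq k) ≤ μ * (1 / 9) ^ k := by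
    intro k
    induction k with
    | zero =>
      have h1 : seq (0 + 1) - seq 0 = -(Ψ w - w) := by rw [hseqS 0, hseq0]; abel
      rw [h1, pNorm_neg]
      have := hball w (by rw [sub_self, pNorm_zero]; positivity)
      simpa using this
    | succ k ih =>
      have h1 : seq (k + 2) - seq (k + 1) =
          (Ψ (seq k) - seq k) - (Ψ (seq (k + 1)) - seq (k + 1)) := by
        rw [hseqS (k + 1), hseqS k]; abel
      rw [h1]
      calc pNorm ((Ψ (seq k) - seq k) - (Ψ (seq (k + 1)) - seq (k + 1)))
          ≤ 1 / 9 * pNorm (seq k - seq (k + 1)) :=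
            lip _ _ (good k).2 (good (k + 1)).2
        _ = 1 / 9 * pNorm (seq (k + 1) - seq k) := by rw [pNorm_sub_comm]
        _ ≤ 1 / 9 * (μ * (1 / 9) ^ k) := by
            linarith [ih]
        _ = μ * (1 / 9) ^ (k + 1) := by ring
  have hcauchy : CauchySeq seq := by
    apply cauchySeq_of_le_geometric (1 / 9 : ℝ) μ (by norm_num)
    intro k
    rw [dist_eq_norm]
    calc ‖seq k - seq (k + 1)‖ ≤ pNorm (seq k - seq (k + 1)) := norm_le_pNorm _
      _ = pNorm (seq (k + 1) - seq k) := pNorm_sub_comm _ _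
      _ ≤ μ * (1 / 9) ^ k := hstep k
  obtain ⟨pstar, hps⟩ := cauchySeq_tendsto_of_complete hcauchy
  -- pass bounds to the limit
  have hcontp : Continuous fun x : CVec n × CVec N => pNorm (x - w) := by
    have he : (fun x : CVec n × CVec N => pNorm (x - w)) =
        fun x => ‖ιL n N x - ιL n N w‖ := by
      funext x
      rw [pNorm_eq, ← ιL_apply, map_sub]
    rw [he]
    exact ((ιL n N).continuous.sub continuous_const).norm
  have hp2μ : pNorm (pstar - w) ≤ 2 * μ :=
    le_of_tendsto ((hcontp.tendsto pstar).comp hps)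
      (Filter.Eventually.of_forall fun k => (good k).2)
  have hrealstar1 : IsRealVec pstar.1 := by
    intro j
    constructor
    · have hc : Continuous fun x : CVec n × CVec N => ((x.1 j).1).im :=
        Complex.continuous_im.comp (continuous_fst.comp
          ((continuous_apply j).comp continuous_fst))
      have ht : Filter.Tendsto (fun k => (((seq k).1 j).1).im) Filter.atTop
          (nhds (((pstar.1 j).1).im)) := (hc.tendsto pstar).comp hps
      have heq : (fun k => (((seq k).1 j).1).im) = fun _ => (0:ℝ) :=
        funext fun k => ((good k).1.1 j).1
      rw [heq] at ht
      exact (tendsto_nhds_unique ht tendsto_const_nhds).symm ▸ rfl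
    · have hc : Continuous fun x : CVec n × CVec N => ((x.1 j).2).im :=
        Complex.continuous_im.comp (continuous_snd.comp
          ((continuous_apply j).comp continuous_fst))
      have ht : Filter.Tendsto (fun k => (((seq k).1 j).2).im) Filter.atTop
          (nhds (((pstar.1 j).2).im)) := (hc.tendsto pstar).comp hps
      have heq : (fun k => (((seq k).1 j).2).im) = fun _ => (0:ℝ) :=
        funext fun k => ((good k).1.1 j).2
      rw [heq] at ht
      exact (tendsto_nhds_unique ht tendsto_const_nhds).symm ▸ rfl
  have hrealstar2 : IsRealVec pstar.2 := by
    intro j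
    constructor
    · have hc : Continuous fun x : CVec n × CVec N => ((x.2 j).1).im :=
        Complex.continuous_im.comp (continuous_fst.comp
          ((continuous_apply j).comp continuous_snd))
      have ht : Filter.Tendsto (fun k => (((seq k).2 j).1).im) Filter.atTop
          (nhds (((pstar.2 j).1).im)) := (hc.tendsto pstar).comp hps
      have heq : (fun k => (((seq k).2 j).1).im) = fun _ => (0:ℝ) :=
        funext fun k => ((good k).1.2 j).1
      rw [heq] at ht
      exact (tendsto_nhds_unique ht tendsto_const_nhds).symm ▸ rfl
    · have hc : Continuous fun x : CVec n × CVec N => ((x.2 j).2).im :=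
        Complex.continuous_im.comp (continuous_snd.comp
          ((continuous_apply j).comp continuous_snd))
      have ht : Filter.Tendsto (fun k => (((seq k).2 j).2).im) Filter.atTop
          (nhds (((pstar.2 j).2).im)) := (hc.tendsto pstar).comp hps
      have heq : (fun k => (((seq k).2 j).2).im) = fun _ => (0:ℝ) :=
        funext fun k => ((good k).1.2 j).2
      rw [heq] at ht
      exact (tendsto_nhds_unique ht tendsto_const_nhds).symm ▸ rfl
  -- the fixed point equation
  have hmemstar : pstar ∈ Dom I0 (2 * r.1, 2 * r.2.1, 2 * r.2.2) :=
    memD2 _ (hp2μ.trans h2le)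
  have hΨcont : ContinuousAt Ψ pstar := (hΨana _ hmemstar).continuousAt
  have h1t : Filter.Tendsto (fun k => seq (k + 1)) Filter.atTop (nhds pstar) :=
    hps.comp (Filter.tendsto_add_atTop_nat 1)
  have h2t : Filter.Tendsto (fun k => w - (Ψ (seq k) - seq k)) Filter.atTop
      (nhds (w - (Ψ pstar - pstar))) :=
    tendsto_const_nhds.sub ((hΨcont.tendsto.comp hps).sub hps)
  have hseqeq : (fun k => seq (k + 1)) = fun k => w - (Ψ (seq k) - seq k) :=
    funext fun k => hseqS k
  rw [hseqeq] at h1t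
  have h3 : pstar = w - (Ψ pstar - pstar) := tendsto_nhds_unique h1t h2t
  have hfix : Ψ pstar = w := by
    have h4 : pstar + (Ψ pstar - pstar) = w := by
      rw [eq_sub_iff_add_eq] at h3; exact h3
    calc Ψ pstar = pstar + (Ψ pstar - pstar) := by abel
      _ = w := h4
  -- final membership
  have h1 : cNorm (pstar.1 - w.1) ≤ 2 * μ := (cNorm_fst_le (pstar - w)).trans hp2μ
  have h2 : cNorm (pstar.2 - w.2) ≤ 2 * μ := (cNorm_snd_le (pstar - w)).trans hp2μ
  have hnp1 : cNorm pstar.1 < r.2.1 + 2 * μ := by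
    have := cNorm_sub_le' pstar.1 w.1; linarith
  have hnp2 : cNorm pstar.2 < r.2.2 + 2 * μ := by
    have := cNorm_sub_le' pstar.2 w.2; linarith
  refine ⟨pstar, hrealstar1, hrealstar2, ⟨?_, ?_, ?_⟩, hfix⟩
  · show cActionDist pstar.1 I0 < 5 / 3 * r.1
    have e1 := actionDist_le pstar.1 w.1 I0
    have hA1' : 2 * μ ≤ r.2.1 := by linarith [hμ2, hr2]
    have hprod : cNorm (pstar.1 - w.1) * (cNorm pstar.1 + cNorm w.1) ≤
        2 * μ * (3 * r.2.1) := by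
      apply mul_le_mul h1 _ _ (by positivity)
      · linarith
      · exact add_nonneg (cNorm_nonneg _) (cNorm_nonneg _)
    have hnum : 2 * μ * (3 * r.2.1) ≤ 2 * (r.1 / 72) := by
      linarith [hμkey]
    linarith [e1, hprod, hnum, hwA, hr1]
  · show cNorm pstar.1 < 5 / 3 * r.2.1
    linarith [hnp1, hμ2, hr2]
  · show cNorm pstar.2 < 5 / 3 * r.2.2
    linarith [hnp2, hμ3, hr3]
end
end

section
/- Periodic approximation of frequency vectors. For every positive integer Q and every ω∈ℝⁿ with |ω|_∞>1, there exist ω⁰∈ℝⁿ and T∈[2π(1−|ω|_∞^{−1}), 2πQ] such that Tω⁰∈2πℤⁿ and |ω−ω⁰|_∞ ≤ 2π/(T·Q^{1/(n−1)}). -/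
noncomputable section

open scoped BigOperators
open Real

section PeriodicApproxAux

open MeasureTheory Submodule
open scoped ENNReal

variable {n : ℕ} [NeZero n]

/-- Auxiliary linear equivalence used to define the lattice for Minkowski's theorem. -/
def periodicApproxEquiv (j0 : Fin n) (N : ℝ) (hN : N ≠ 0) (β : Fin n → ℝ) :
    (Fin n → ℝ) ≃ₗ[ℝ] (Fin n → ℝ) where
  toFun x := fun j => if j = j0 then N * x j0 else N * β j * x j0 - x j
  map_add' x y := by
    funext j; by_cases h : j = j0 <;> simp [h] <;> ring
  map_smul' r x := by
    funext j; by_cases h : j = j0 <;> simp [h] <;> ring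
  invFun y := fun j => if j = j0 then y j0 / N else β j * y j0 - y j
  left_inv x := by
    funext j; by_cases h : j = j0 <;> simp [h]
    · field_simp
    · ring
  right_inv y := by
    funext j; by_cases h : j = j0 <;> simp [h]
    · field_simp
    · field_simp; ring

lemma periodicApprox_volume (j0 : Fin n) (N : ℝ) (hN : 0 < N) (β : Fin n → ℝ) :
    volume (ZSpan.fundamentalDomain ((Pi.basisFun ℝ (Fin n)).map
      (periodicApproxEquiv j0 N hN.ne' β))) = ENNReal.ofReal N := by
  classical
  rw [ZSpan.volume_fundamentalDomain]
  have hb : ∀ i j, ((Pi.basisFun ℝ (Fin n)).map (periodicApproxEquiv j0 N hN.ne' β)) i j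
      = if j = j0 then N * (if j0 = i then 1 else 0)
        else N * β j * (if j0 = i then 1 else 0) - (if j = i then 1 else 0) := by
    intro i j
    simp [periodicApproxEquiv, Pi.single_apply]
  set M := Matrix.of ⇑((Pi.basisFun ℝ (Fin n)).map (periodicApproxEquiv j0 N hN.ne' β)) with hM
  have hMij : ∀ i j, M i j = if j = j0 then N * (if j0 = i then 1 else 0)
        else N * β j * (if j0 = i then 1 else 0) - (if j = i then 1 else 0) := hb
  set σ := Equiv.swap (0 : Fin n) j0 with hσ
  have hdet : M.det = (M.submatrix σ σ).det := (Matrix.det_submatrix_equiv_self σ M).symm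
  have htri : (M.submatrix σ σ).BlockTriangular id := by
    intro i j hij
    have hi0 : i ≠ 0 := by
      rintro rfl
      have : (j : ℕ) < (0 : Fin n).val := hij
      simp [Fin.val_zero] at this
    have hσi : σ i ≠ j0 := by
      intro h
      have : σ i = σ 0 := by rw [h, hσ]; simp [Equiv.swap_apply_left]
      exact hi0 (σ.injective this)
    have hij' : i ≠ j := by intro h; subst h; exact lt_irrefl _ hij
    have hσij : σ i ≠ σ j := fun h => hij' (σ.injective h)
    simp only [Matrix.submatrix_apply, hMij]
    by_cases hj : σ j = j0
    · simp [hj, hσi, (Ne.symm hσi : j0 ≠ σ i)]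
    · simp [hj, (Ne.symm hσi : j0 ≠ σ i), (Ne.symm hσij : σ j ≠ σ i)]
  rw [hdet, Matrix.det_of_upperTriangular htri]
  have hdiag : ∀ i, (M.submatrix σ σ) i i = if i = 0 then N else -1 := by
    intro i
    by_cases h : i = 0
    · subst h
      have : σ 0 = j0 := by rw [hσ]; exact Equiv.swap_apply_left _ _
      simp [Matrix.submatrix_apply, hMij, this]
    · have hσi : σ i ≠ j0 := by
        intro hh
        have : σ i = σ 0 := by rw [hh, hσ]; simp [Equiv.swap_apply_left]
        exact h (σ.injective this)
      simp [Matrix.submatrix_apply, hMij, hσi, (Ne.symm hσi : j0 ≠ σ i), h]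
  calc ENNReal.ofReal |∏ i, (M.submatrix σ σ) i i|
      = ENNReal.ofReal |∏ i : Fin n, if i = 0 then N else -1| := by
        congr 1; congr 1; exact Finset.prod_congr rfl fun i _ => hdiag i
    _ = ENNReal.ofReal N := by
        rw [← Finset.mul_prod_erase Finset.univ _ (Finset.mem_univ (0 : Fin n))]
        rw [if_pos rfl]
        rw [Finset.prod_congr rfl (fun i hi => if_neg (Finset.mem_erase.mp hi).1)]
        rw [Finset.prod_const, abs_mul, abs_pow, abs_neg, abs_one, one_pow, mul_one,
          abs_of_pos hN]

/-- Key lemma: application of Minkowski's convex body theorem. -/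
lemma periodicApprox_key (j0 : Fin n) (N : ℝ) (hN : 0 < N) (β : Fin n → ℝ) (Qs δ : ℝ)
    (hQs : 0 < Qs) (hδ : 0 < δ) (hlt : N < Qs * δ ^ (n - 1)) :
    ∃ c : Fin n → ℤ, (∃ j, c j ≠ 0) ∧ |N * c j0| ≤ Qs ∧
      ∀ j, j ≠ j0 → |N * β j * c j0 - c j| ≤ δ := by
  classical
  set b := (Pi.basisFun ℝ (Fin n)).map (periodicApproxEquiv j0 N hN.ne' β) with hbdef
  have hvolF : volume (ZSpan.fundamentalDomain b) = ENNReal.ofReal N :=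
    periodicApprox_volume j0 N hN β
  set cvec : Fin n → ℝ := fun j => if j = j0 then Qs else δ with hcvec
  set S : Set (Fin n → ℝ) := Set.Icc (-cvec) cvec with hSdef
  have h_symm : ∀ x ∈ S, -x ∈ S := by
    intro x hx
    rw [hSdef, Set.mem_Icc] at hx ⊢
    refine ⟨_root_.neg_le_neg hx.2, ?_⟩
    have := _root_.neg_le_neg hx.1
    simpa using this
  have h_conv : Convex ℝ S := convex_Icc _ _
  have hvolS : volume S = ENNReal.ofReal (2 * Qs) * ENNReal.ofReal (2 * δ) ^ (n - 1) := by
    rw [hSdef, Real.volume_Icc_pi]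
    have : ∀ j : Fin n, ENNReal.ofReal (cvec j - (-cvec) j)
        = if j = j0 then ENNReal.ofReal (2 * Qs) else ENNReal.ofReal (2 * δ) := by
      intro j
      by_cases h : j = j0 <;> simp [hcvec, h, two_mul]
    rw [Finset.prod_congr rfl fun j _ => this j,
      ← Finset.mul_prod_erase Finset.univ _ (Finset.mem_univ j0), if_pos rfl,
      Finset.prod_congr rfl (fun i hi => if_neg (Finset.mem_erase.mp hi).1),
      Finset.prod_const, Finset.card_erase_of_mem (Finset.mem_univ j0), Finset.card_univ,
      Fintype.card_fin]
  have hvol : volume (ZSpan.fundamentalDomain b) * 2 ^ (Module.finrank ℝ (Fin n → ℝ))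
      < volume S := by
    rw [hvolF, hvolS, Module.finrank_pi, Fintype.card_fin]
    have h2 : (2 : ℝ≥0∞) ^ n = ENNReal.ofReal (2 ^ n) := by
      rw [ENNReal.ofReal_pow (by norm_num)]; norm_num
    rw [h2, ← ENNReal.ofReal_mul hN.le, ← ENNReal.ofReal_pow (by positivity),
      ← ENNReal.ofReal_mul (by positivity)]
    apply ENNReal.ofReal_lt_ofReal_iff_of_nonneg (by positivity) |>.mpr
    have hn1 : n - 1 + 1 = n := Nat.succ_pred_eq_of_pos (Nat.pos_of_ne_zero (NeZero.ne n))
    obtain ⟨m, hm⟩ : ∃ m, n = m + 1 := ⟨n - 1, hn1.symm⟩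
    calc N * 2 ^ n < (Qs * δ ^ (n-1)) * 2 ^ n := by
            apply mul_lt_mul_of_pos_right hlt (by positivity)
      _ = 2 * Qs * (2 * δ) ^ (n - 1) := by
            rw [mul_pow]
            rw [show n - 1 = m from by omega, hm, pow_succ]
            ring
  have fund := ZSpan.isAddFundamentalDomain' b volume
  haveI : Countable (span ℤ (Set.range ⇑b)).toAddSubgroup :=
    inferInstanceAs (Countable (span ℤ (Set.range ⇑b)))
  obtain ⟨x, hx0, hxS⟩ :=
    exists_ne_zero_mem_lattice_of_measure_mul_two_pow_lt_measure fund h_symm h_conv hvol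
  obtain ⟨c, hc⟩ := (mem_span_range_iff_exists_fun ℤ).mp x.2
  have hxc : ∀ j, (x : Fin n → ℝ) j
      = if j = j0 then N * (c j0 : ℝ) else N * β j * (c j0 : ℝ) - (c j : ℝ) := by
    intro j
    have := congrFun hc j
    rw [← this]
    have hsum : (∑ i, c i • b i) j = ∑ i, (c i : ℝ) * b i j := by
      rw [Finset.sum_apply]
      exact Finset.sum_congr rfl fun i _ => by
        simp [Pi.smul_apply, zsmul_eq_mul]
    rw [hsum]
    have hb : ∀ i j', b i j' = if j' = j0 then N * (if j0 = i then 1 else 0)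
        else N * β j' * (if j0 = i then 1 else 0) - (if j' = i then 1 else 0) := by
      intro i j'
      simp [hbdef, periodicApproxEquiv, Pi.single_apply]
    by_cases h : j = j0
    · subst h
      simp only [hb, if_pos rfl, if_pos rfl]
      simp [mul_ite, Finset.sum_ite_eq, mul_comm]
    · simp only [hb, if_neg h]
      have : ∀ i, (c i : ℝ) * ((N * β j * (if j0 = i then 1 else 0)) - (if j = i then 1 else 0))
          = (N * β j * (if j0 = i then (c i : ℝ) else 0)) - (if j = i then (c i : ℝ) else 0) := by
        intro i; by_cases h1 : j0 = i <;> by_cases h2 : j = i <;> simp [h1, h2] <;> ring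
      rw [Finset.sum_congr rfl fun i _ => this i, Finset.sum_sub_distrib]
      simp [mul_ite, mul_zero, Finset.sum_ite_eq]
  refine ⟨c, ?_, ?_, ?_⟩
  · by_contra hall
    push_neg at hall
    apply hx0
    have : (x : Fin n → ℝ) = 0 := by
      funext j
      rw [hxc j]
      by_cases h : j = j0 <;> simp [h, hall]
    exact Subtype.ext this
  · have habs : ∀ j, |(x : Fin n → ℝ) j| ≤ cvec j := fun j =>
      abs_le.mpr ⟨by simpa using (Set.mem_Icc.mp hxS).1 j, (Set.mem_Icc.mp hxS).2 j⟩
    have := habs j0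
    rw [hxc j0, if_pos rfl] at this
    simpa [hcvec] using this
  · intro j hj
    have habs : ∀ j, |(x : Fin n → ℝ) j| ≤ cvec j := fun j =>
      abs_le.mpr ⟨by simpa using (Set.mem_Icc.mp hxS).1 j, (Set.mem_Icc.mp hxS).2 j⟩
    have := habs j
    rw [hxc j, if_neg hj] at this
    simpa [hcvec, hj] using this

end PeriodicApproxAux

/-- **Periodic approximation of frequency vectors.** For every positive integer `Q` and every
`ω ∈ ℝⁿ` (`n ≥ 2`) with `|ω|_∞ > 1`, there exist `ω⁰ ∈ ℝⁿ` and
`T ∈ [2π(1 - |ω|_∞⁻¹), 2πQ]` such that `Tω⁰ ∈ 2πℤⁿ` and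
`|ω - ω⁰|_∞ ≤ 2π/(T Q^{1/(n-1)})`. -/
theorem periodic_approximation_of_frequencies (n Q : ℕ) (hn : 2 ≤ n) (hQ : 0 < Q)
    (ω : Fin n → ℝ) (hω : 1 < ⨆ j, |ω j|) :
    ∃ (ω0 : Fin n → ℝ) (T : ℝ),
      T ∈ Set.Icc (2 * π * (1 - (⨆ j, |ω j|)⁻¹)) (2 * π * Q) ∧
      (∀ j, ∃ m : ℤ, T * ω0 j = 2 * π * m) ∧
      ∀ j, |ω j - ω0 j| ≤ 2 * π / (T * (Q : ℝ) ^ ((1 : ℝ) / ((n : ℝ) - 1))) := by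
  have hn0 : 0 < n := by omega
  haveI : NeZero n := ⟨by omega⟩
  have hn2 : (2 : ℝ) ≤ (n : ℝ) := by exact_mod_cast hn
  have hQ0' : (0 : ℝ) < Q := by exact_mod_cast hQ
  set s := ⨆ j, |ω j| with hs_def
  have hs1 : 1 < s := hω
  have hs0 : 0 < s := lt_trans one_pos hs1
  obtain ⟨j0, hj0⟩ := exists_eq_ciSup_of_finite (f := fun j => |ω j|)
  set R : ℝ := (Q : ℝ) ^ ((1 : ℝ) / ((n : ℝ) - 1)) with hR_def
  have hexp : 0 < (1 : ℝ) / ((n : ℝ) - 1) := by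
    apply div_pos one_pos; linarith
  have hR1 : 1 ≤ R := Real.one_le_rpow (by exact_mod_cast hQ) hexp.le
  have hR0 : 0 < R := zero_lt_one.trans_le hR1
  set N := ⌈s - 1⌉₊ with hN_def
  have hN1 : 1 ≤ N := Nat.ceil_pos.mpr (by linarith)
  have hNlt : (N : ℝ) < s := by
    have := Nat.ceil_lt_add_one (show (0:ℝ) ≤ s - 1 by linarith)
    rw [← hN_def] at this
    linarith
  have hNge : s - 1 ≤ (N : ℝ) := Nat.le_ceil _
  have hN0 : (0 : ℝ) < N := by exact_mod_cast hN1
  have hπ := Real.pi_pos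
  suffices h : ∃ (k : ℤ) (m : Fin n → ℤ), 1 ≤ k ∧ ((N : ℝ) * k ≤ Q * s) ∧
      ∀ j, j ≠ j0 → |(N : ℝ) * (ω j / s) * (k : ℝ) - (m j : ℝ)| ≤ R⁻¹ by
    obtain ⟨k, m, hk1, hkQ, hm⟩ := h
    have hk0 : (1 : ℝ) ≤ (k : ℝ) := by exact_mod_cast hk1
    have hNk : (1 : ℝ) ≤ (N : ℝ) * k := by
      have h1 : (1:ℝ) ≤ (N:ℝ) := by exact_mod_cast hN1
      nlinarith
    have hNk0 : (0 : ℝ) < (N : ℝ) * k := by linarith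
    set T : ℝ := 2 * π * ((N : ℝ) * k) / s with hT_def
    have hT0 : 0 < T := by
      apply div_pos _ hs0; positivity
    set m' : Fin n → ℤ := fun j =>
      if j = j0 then (if 0 ≤ ω j0 then (N : ℤ) * k else -((N : ℤ) * k)) else m j with hm'_def
    have hTω0 : T * ω j0 = 2 * π * (m' j0 : ℝ) := by
      rcases (abs_eq hs0.le).mp hj0 with h | h
      · have hpos : 0 ≤ ω j0 := by rw [h]; exact hs0.le
        have : m' j0 = (N : ℤ) * k := by rw [hm'_def]; simp [hpos]
        rw [this, hT_def, h]
        push_cast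
        field_simp
      · have hneg : ¬ (0 ≤ ω j0) := by rw [h]; simp; linarith
        have : m' j0 = -((N : ℤ) * k) := by rw [hm'_def]; simp [hneg]
        rw [this, hT_def, h]
        push_cast
        field_simp
    refine ⟨fun j => 2 * π * (m' j : ℝ) / T, T, ⟨?_, ?_⟩, ?_, ?_⟩
    · -- lower bound on T
      have h1 : 1 - s⁻¹ ≤ (N : ℝ) * k / s := by
        rw [show (1 : ℝ) - s⁻¹ = (s - 1) / s by field_simp]
        apply (div_le_div_iff_of_pos_right hs0).mpr
        nlinarith
      calc 2 * π * (1 - s⁻¹) ≤ 2 * π * ((N : ℝ) * k / s) := by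
            apply mul_le_mul_of_nonneg_left h1 (by positivity)
        _ = T := by rw [hT_def]; ring
    · -- upper bound on T
      have h2 : (N : ℝ) * k / s ≤ Q := (div_le_iff₀ hs0).mpr hkQ
      calc T = 2 * π * ((N : ℝ) * k / s) := by rw [hT_def]; ring
        _ ≤ 2 * π * Q := by apply mul_le_mul_of_nonneg_left h2 (by positivity)
    · -- T * ω0 ∈ 2πℤ
      intro j
      refine ⟨m' j, ?_⟩
      show T * (2 * π * (m' j : ℝ) / T) = 2 * π * (m' j : ℝ)
      field_simp
    · -- approximation bound
      intro j
      by_cases hj : j = j0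
      · subst hj
        show |ω j - 2 * π * (m' j : ℝ) / T| ≤ 2 * π / (T * R)
        have : ω j = 2 * π * (m' j : ℝ) / T := by
          rw [eq_div_iff hT0.ne', mul_comm]
          exact hTω0
        rw [← this, sub_self, abs_zero]
        exact div_nonneg (by positivity) (mul_nonneg hT0.le hR0.le)
      · show |ω j - 2 * π * (m' j : ℝ) / T| ≤ 2 * π / (T * R)
        have hmj : m' j = m j := by rw [hm'_def]; simp [hj]
        have key : ω j - 2 * π * ((m j : ℤ) : ℝ) / T
            = (s / ((N : ℝ) * k)) * ((N : ℝ) * (ω j / s) * (k : ℝ) - (m j : ℝ)) := by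
          rw [hT_def]
          field_simp
        rw [hmj, key]
        have hrhs : 2 * π / (T * R) = (s / ((N : ℝ) * k)) * R⁻¹ := by
          rw [hT_def]
          field_simp
        rw [hrhs, abs_mul, abs_of_pos (div_pos hs0 hNk0)]
        exact mul_le_mul_of_nonneg_left (hm j hj) (div_pos hs0 hNk0).le
  -- now prove the key existence statement
  by_cases hQ1 : Q = 1
  · -- trivial case Q = 1
    subst hQ1
    have hR' : R = 1 := by rw [hR_def]; simp
    refine ⟨1, fun j => round ((N : ℝ) * (ω j / s)), le_refl 1, ?_, ?_⟩
    · push_cast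
      nlinarith
    · intro j _
      rw [hR', inv_one]
      push_cast
      rw [mul_one]
      calc |(N : ℝ) * (ω j / s) - round ((N : ℝ) * (ω j / s))| ≤ 1 / 2 := abs_sub_round _
        _ ≤ 1 := by norm_num
  · have hQ2 : 2 ≤ Q := by omega
    have hRgt1 : 1 < R := by
      rw [hR_def]
      exact (Real.one_lt_rpow_iff_of_pos hQ0').mpr (Or.inl ⟨by exact_mod_cast hQ2, hexp⟩)
    have hδ0 : 0 < R⁻¹ := by positivity
    have hδ1 : R⁻¹ < 1 := by
      rw [inv_lt_one_iff₀]; right; exact hRgt1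
    have hpow : (R⁻¹) ^ (n - 1) = (Q : ℝ)⁻¹ := by
      have hd : ((n : ℝ) - 1) ≠ 0 := by linarith
      have h1 : R⁻¹ = (Q : ℝ) ^ (-((1 : ℝ) / ((n : ℝ) - 1))) := by
        rw [hR_def, Real.rpow_neg hQ0'.le]
      have h2 : ((n - 1 : ℕ) : ℝ) = (n : ℝ) - 1 := by
        rw [Nat.cast_sub (by omega)]; norm_num
      rw [← Real.rpow_natCast (R⁻¹) (n - 1), h1, ← Real.rpow_mul hQ0'.le, h2]
      rw [show -((1 : ℝ) / ((n : ℝ) - 1)) * ((n : ℝ) - 1) = -1 by field_simp]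
      exact Real.rpow_neg_one _
    have hlt : (N : ℝ) < (Q * s) * (R⁻¹) ^ (n - 1) := by
      rw [hpow]
      rw [show (Q : ℝ) * s * (Q : ℝ)⁻¹ = s by field_simp]
      exact hNlt
    obtain ⟨c, ⟨jw, hjw⟩, habs1, habs2⟩ :=
      periodicApprox_key j0 (N : ℝ) hN0 (fun j => ω j / s) (Q * s) R⁻¹ (by positivity) hδ0 hlt
    have hc0 : c j0 ≠ 0 := by
      intro h0
      have hzero : ∀ j, j ≠ j0 → c j = 0 := by
        intro j hj
        have := habs2 j hj
        rw [h0] at this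
        push_cast at this
        rw [mul_zero, zero_sub, abs_neg] at this
        have : |(c j : ℝ)| < 1 := lt_of_le_of_lt this hδ1
        have : |c j| < 1 := by exact_mod_cast this
        exact Int.abs_lt_one_iff.mp this
      by_cases hw : jw = j0
      · exact hjw (hw ▸ h0)
      · exact hjw (hzero jw hw)
    rcases hc0.lt_or_gt with hneg | hpos
    · refine ⟨-(c j0), fun j => -(c j), by omega, ?_, ?_⟩
      · have : |(N : ℝ) * (c j0 : ℝ)| = (N : ℝ) * (-(c j0) : ℤ) := by
          push_cast
          rw [abs_mul, abs_of_pos hN0, abs_of_neg (show ((c j0 : ℝ)) < 0 by exact_mod_cast hneg)]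
        rw [← this]
        exact habs1
      · intro j hj
        have := habs2 j hj
        push_cast
        rw [show (N : ℝ) * (ω j / s) * (-(c j0 : ℝ)) - (-(c j : ℝ))
            = -((N : ℝ) * (ω j / s) * (c j0 : ℝ) - (c j : ℝ)) by ring, abs_neg]
        exact this
    · refine ⟨c j0, c, by omega, ?_, ?_⟩
      · have : |(N : ℝ) * (c j0 : ℝ)| = (N : ℝ) * (c j0 : ℝ) := by
          rw [abs_mul, abs_of_pos hN0,
            abs_of_pos (show (0:ℝ) < (c j0 : ℝ) by exact_mod_cast hpos)]
        rw [← this]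
        exact habs1
      · intro j hj
        exact habs2 j hj

end
end
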